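/- arXiv:1601.06529 — 5 statements merged into one kernel-verified Lean document; each statement's English description precedes it below -/
import Mathlib

section
/- Let f be strictly convex and differentiable on (0,∞), let P, Q be mutually orthogonal rank-one projections on a finite-dimensional complex Hilbert space, let 0 < λ < μ < 1 with λ + μ = 1, and set S = λP + μQ. Then for any rank-one projection R with range contained in range(P) + range(Q), one has H_f(R, S) = −f'(λ)·tr(RP) − f'(μ)·tr(RQ) + C, where C = λf'(λ) − f(λ) + μf'(μ) − f(μ), assuming f(0) = f(1) = 0. -/
open Matrix
open scoped ComplexOrder

/-- Standard operator function: apply `f : ℝ → ℝ` to a Hermitian matrix via its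
spectral decomposition (junk value `0` for non-Hermitian input). -/
noncomputable def matFun {n : ℕ} (f : ℝ → ℝ) (A : Matrix (Fin n) (Fin n) ℂ) :
    Matrix (Fin n) (Fin n) ℂ :=
  if hA : A.IsHermitian then
    (hA.eigenvectorUnitary : Matrix (Fin n) (Fin n) ℂ) *
      Matrix.diagonal (fun i => (f (hA.eigenvalues i) : ℂ)) *
      (star (hA.eigenvectorUnitary : Matrix (Fin n) (Fin n) ℂ))
  else 0

/-- Bregman `f`-divergence `H_f(A,B) = tr (f(A) - f(B) - f'(B)(A-B))`. -/
noncomputable def bregman {n : ℕ} (f : ℝ → ℝ) (A B : Matrix (Fin n) (Fin n) ℂ) : ℝ :=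
  ((matFun f A - matFun f B - matFun (deriv f) B * (A - B)).trace).re

/-- Jensen `f`-divergence `J_f(A,B) = tr (½(f(A)+f(B)) - f(½(A+B)))`. -/
noncomputable def jensen {n : ℕ} (f : ℝ → ℝ) (A B : Matrix (Fin n) (Fin n) ℂ) : ℝ :=
  (((1/2 : ℂ) • (matFun f A + matFun f B) - matFun f ((1/2 : ℂ) • (A + B))).trace).re

/-- `P` is a rank-one (orthogonal) projection. -/
def IsRankOneProj {n : ℕ} (P : Matrix (Fin n) (Fin n) ℂ) : Prop :=
  P.IsHermitian ∧ P * P = P ∧ P.rank = 1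

section Helpers

variable {n : ℕ} {A : Matrix (Fin n) (Fin n) ℂ}

lemma matFun_eq (hA : A.IsHermitian) (f : ℝ → ℝ) :
    matFun f A = (hA.eigenvectorUnitary : Matrix (Fin n) (Fin n) ℂ) *
      Matrix.diagonal (fun i => (f (hA.eigenvalues i) : ℂ)) *
      (star (hA.eigenvectorUnitary : Matrix (Fin n) (Fin n) ℂ)) := dif_pos hA

lemma star_mul_selfU (hA : A.IsHermitian) :
    star (hA.eigenvectorUnitary : Matrix (Fin n) (Fin n) ℂ) *
      (hA.eigenvectorUnitary : Matrix (Fin n) (Fin n) ℂ) = 1 := by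
  exact Matrix.mem_unitaryGroup_iff'.mp hA.eigenvectorUnitary.2

lemma mul_star_selfU (hA : A.IsHermitian) :
    (hA.eigenvectorUnitary : Matrix (Fin n) (Fin n) ℂ) *
      star (hA.eigenvectorUnitary : Matrix (Fin n) (Fin n) ℂ) = 1 := by
  exact Matrix.mem_unitaryGroup_iff.mp hA.eigenvectorUnitary.2

lemma matFun_congr (hA : A.IsHermitian) {f g : ℝ → ℝ}
    (h : ∀ i, f (hA.eigenvalues i) = g (hA.eigenvalues i)) : matFun f A = matFun g A := by
  have e : (fun i => (f (hA.eigenvalues i) : ℂ)) = fun i => (g (hA.eigenvalues i) : ℂ) :=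
    funext fun i => by rw [h i]
  rw [matFun_eq hA, matFun_eq hA, e]

lemma matFun_mul (hA : A.IsHermitian) (f g : ℝ → ℝ) :
    matFun (fun x => f x * g x) A = matFun f A * matFun g A := by
  rw [matFun_eq hA, matFun_eq hA, matFun_eq hA]
  rw [show ∀ (B C D E : Matrix (Fin n) (Fin n) ℂ), B * C * D * (B * E * D) = B * (C * ((D * B) * E)) * D from fun _ _ _ _ => by noncomm_ring]
  rw [star_mul_selfU hA, one_mul, diagonal_mul_diagonal]
  congr 2
  exact funext fun i => by push_cast; ring

lemma matFun_add (hA : A.IsHermitian) (f g : ℝ → ℝ) :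
    matFun (fun x => f x + g x) A = matFun f A + matFun g A := by
  have e : (Matrix.diagonal fun i => ((f (hA.eigenvalues i) + g (hA.eigenvalues i) : ℝ) : ℂ)) =
      Matrix.diagonal (fun i => (f (hA.eigenvalues i) : ℂ)) +
        Matrix.diagonal (fun i => (g (hA.eigenvalues i) : ℂ)) := by
    rw [diagonal_add]
    congr 1
    funext i
    push_cast
    rfl
  rw [matFun_eq hA, matFun_eq hA, matFun_eq hA, e, mul_add, add_mul]

lemma matFun_smul (hA : A.IsHermitian) (c : ℝ) (f : ℝ → ℝ) :
    matFun (fun x => c * f x) A = (c : ℂ) • matFun f A := by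
  have e : (Matrix.diagonal fun i => ((c * f (hA.eigenvalues i) : ℝ) : ℂ)) =
      (c : ℂ) • Matrix.diagonal (fun i => (f (hA.eigenvalues i) : ℂ)) := by
    have e2 : (fun i => ((c * f (hA.eigenvalues i) : ℝ) : ℂ)) =
        (c : ℂ) • fun i => (f (hA.eigenvalues i) : ℂ) := by
      funext i; simp [Pi.smul_apply, smul_eq_mul]
    rw [e2, diagonal_smul]
  rw [matFun_eq hA, matFun_eq hA, e, mul_smul_comm, smul_mul_assoc]

lemma matFun_id (hA : A.IsHermitian) : matFun (fun x => x) A = A := by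
  rw [matFun_eq hA]
  exact (hA.spectral_theorem).symm

lemma matFun_const (hA : A.IsHermitian) (c : ℝ) : matFun (fun _ => c) A = (c : ℂ) • 1 := by
  have e : (Matrix.diagonal fun _ : Fin n => (c : ℂ)) = (c : ℂ) • (1 : Matrix (Fin n) (Fin n) ℂ) := by
    ext i j
    by_cases h : i = j <;> simp [Matrix.diagonal_apply, Matrix.one_apply, h]
  rw [matFun_eq hA, e, mul_smul_comm, mul_one, smul_mul_assoc, mul_star_selfU hA]

lemma eigen_vanish (hA : A.IsHermitian) (g : ℝ → ℝ) (h : matFun g A = 0) :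
    ∀ i, g (hA.eigenvalues i) = 0 := by
  intro i
  rw [matFun_eq hA] at h
  have h2 : Matrix.diagonal (fun i => (g (hA.eigenvalues i) : ℂ)) = 0 := by
    calc Matrix.diagonal (fun i => (g (hA.eigenvalues i) : ℂ))
        = star (hA.eigenvectorUnitary : Matrix (Fin n) (Fin n) ℂ) *
          ((hA.eigenvectorUnitary : Matrix (Fin n) (Fin n) ℂ) *
            Matrix.diagonal (fun i => (g (hA.eigenvalues i) : ℂ)) *
            star (hA.eigenvectorUnitary : Matrix (Fin n) (Fin n) ℂ)) *
          (hA.eigenvectorUnitary : Matrix (Fin n) (Fin n) ℂ) := by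
          rw [show ∀ (B C D : Matrix (Fin n) (Fin n) ℂ), D * (B * C * D) * B = (D * B) * C * (D * B) from fun _ _ _ => by noncomm_ring,
            star_mul_selfU hA, one_mul, mul_one]
      _ = 0 := by rw [h, mul_zero, zero_mul]
  have := congrFun (congrFun h2 i) i
  simp only [Matrix.diagonal_apply_eq, Matrix.zero_apply] at this
  exact_mod_cast this

lemma matFun_quad (hA : A.IsHermitian) (a b : ℝ) :
    matFun (fun x => a * (x * x) + b * x) A = (a : ℂ) • (A * A) + (b : ℂ) • A := by
  rw [matFun_add hA (fun x => a * (x * x)) (fun x => b * x),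
      matFun_smul hA a (fun x => x * x), matFun_smul hA b (fun x => x),
      matFun_mul hA (fun x => x) (fun x => x), matFun_id hA]

lemma matFun_sub_const (hA : A.IsHermitian) (c : ℝ) :
    matFun (fun x => x - c) A = A - (c : ℂ) • 1 := by
  have e : (fun x : ℝ => x - c) = fun x => x + (-c) := by funext x; ring
  rw [e, matFun_add hA (fun x => x) (fun _ => -c), matFun_id hA, matFun_const hA]
  push_cast
  rw [neg_smul, ← sub_eq_add_neg]

lemma eigs_idem (hA : A.IsHermitian) (h2 : A * A = A) :
    ∀ i, hA.eigenvalues i = 0 ∨ hA.eigenvalues i = 1 := by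
  intro i
  have hv : matFun (fun x => x * x + (-1) * x) A = 0 := by
    rw [matFun_add hA (fun x => x * x) (fun x => (-1) * x),
        matFun_mul hA (fun x => x) (fun x => x), matFun_id hA,
        matFun_smul hA (-1) (fun x => x), matFun_id hA, h2]
    push_cast
    simp
  have hz := eigen_vanish hA _ hv i
  have h3 : hA.eigenvalues i * (hA.eigenvalues i - 1) = 0 := by linear_combination hz
  rcases mul_eq_zero.mp h3 with h | h
  · exact Or.inl h
  · exact Or.inr (by linarith)

lemma trace_eq_sum_eigs (hA : A.IsHermitian) : A.trace = ∑ i, (hA.eigenvalues i : ℂ) := by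
  rw [show A.trace = (matFun (fun x => x) A).trace by rw [matFun_id hA], matFun_eq hA]
  rw [Matrix.trace_mul_cycle, star_mul_selfU hA, one_mul, Matrix.trace_diagonal]

lemma trace_idem_rankone (hA : A.IsHermitian) (h2 : A * A = A) (hr : A.rank = 1) :
    A.trace = 1 := by
  classical
  have heig := eigs_idem hA h2
  have hcard : (Finset.univ.filter (fun i => hA.eigenvalues i ≠ 0)).card = 1 := by
    have h := hA.rank_eq_card_non_zero_eigs
    rw [hr, Fintype.card_subtype] at h
    omega
  have hsum : ∑ i, hA.eigenvalues i = 1 := by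
    rw [← Finset.sum_filter_ne_zero Finset.univ]
    have : ∀ i ∈ Finset.univ.filter (fun i => hA.eigenvalues i ≠ 0), hA.eigenvalues i = 1 := by
      intro i hi
      rcases heig i with h | h
      · exact absurd h (by simpa using hi)
      · exact h
    rw [Finset.sum_congr rfl this, Finset.sum_const, hcard]
    simp
  rw [trace_eq_sum_eigs hA, ← Complex.ofReal_sum, hsum, Complex.ofReal_one]

end Helpers

/-- value of the Bregman divergence of a rank-one projection `R`
supported in the support of `S = λP + μQ`. -/
theorem bregman_rankOne_vs_rankTwo {n : ℕ} (f : ℝ → ℝ)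
    (hconv : StrictConvexOn ℝ (Set.Ioi 0) f)
    (hdiff : ∀ x ∈ Set.Ioi (0 : ℝ), DifferentiableAt ℝ f x)
    (hf0 : f 0 = 0) (hf1 : f 1 = 0)
    (P Q : Matrix (Fin n) (Fin n) ℂ) (hP : IsRankOneProj P) (hQ : IsRankOneProj Q)
    (hPQ : P * Q = 0)
    (lam mu : ℝ) (hlam : 0 < lam) (hlm : lam < mu) (hmu : mu < 1) (hsum : lam + mu = 1)
    (R : Matrix (Fin n) (Fin n) ℂ) (hR : IsRankOneProj R) (hsupp : (P + Q) * R = R) :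
    bregman f R ((lam : ℂ) • P + (mu : ℂ) • Q) =
      -(deriv f lam) * ((R * P).trace).re - (deriv f mu) * ((R * Q).trace).re +
        (lam * deriv f lam - f lam + mu * deriv f mu - f mu) := by
  obtain ⟨hPh, hP2, hPr⟩ := hP
  obtain ⟨hQh, hQ2, hQr⟩ := hQ
  obtain ⟨hRh, hR2, hRr⟩ := hR
  have hmu0 : (0:ℝ) < mu := lt_trans hlam hlm
  have hlm' : lam - mu ≠ 0 := by intro h; linarith
  have hlam' : lam ≠ 0 := ne_of_gt hlam
  have hmu' : mu ≠ 0 := ne_of_gt hmu0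
  have hQP : Q * P = 0 := by
    have h := congrArg Matrix.conjTranspose hPQ
    simpa [Matrix.conjTranspose_mul, hPh.eq, hQh.eq] using h
  set S : Matrix (Fin n) (Fin n) ℂ := (lam : ℂ) • P + (mu : ℂ) • Q with hSdef
  have hSh : S.IsHermitian := by
    simp [hSdef, Matrix.IsHermitian, Matrix.conjTranspose_add, Matrix.conjTranspose_smul,
      hPh.eq, hQh.eq, Complex.star_def, Complex.conj_ofReal]
  have hS2 : S * S = ((lam : ℂ) * lam) • P + ((mu : ℂ) * mu) • Q := by
    simp only [hSdef, add_mul, mul_add, smul_mul_assoc, mul_smul_comm, hP2, hQ2, hPQ, hQP,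
      smul_smul, smul_zero, add_zero, zero_add]
  have hannS : matFun (fun x => x * ((x - lam) * (x - mu))) S = 0 := by
    rw [matFun_mul hSh (fun x => x) (fun x => (x - lam) * (x - mu)), matFun_id hSh,
        matFun_mul hSh (fun x => x - lam) (fun x => x - mu), matFun_sub_const hSh,
        matFun_sub_const hSh]
    rw [hSdef]
    simp only [sub_mul, mul_sub, add_mul, mul_add, smul_mul_assoc, mul_smul_comm,
      hP2, hQ2, hPQ, hQP, smul_smul, mul_one, one_mul, smul_zero, Matrix.mul_one,
      Matrix.one_mul, sub_zero, zero_sub, mul_zero, zero_mul, add_zero, zero_add]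
    module
  have heigS : ∀ i, hSh.eigenvalues i = 0 ∨ hSh.eigenvalues i = lam ∨ hSh.eigenvalues i = mu := by
    intro i
    have h := eigen_vanish hSh _ hannS i
    rcases mul_eq_zero.mp h with h1 | h1
    · exact Or.inl h1
    rcases mul_eq_zero.mp h1 with h2 | h2
    · exact Or.inr (Or.inl (by linarith [sub_eq_zero.mp h2]))
    · exact Or.inr (Or.inr (by linarith [sub_eq_zero.mp h2]))
  -- interpolation for f
  have h4 : -mu + lam ≠ 0 := fun h => hlm' (by linarith)
  set a : ℝ := (f lam / lam - f mu / mu) / (lam - mu) with ha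
  set b : ℝ := f lam / lam - a * lam with hb
  have h1 : a * (lam * lam) + b * lam = f lam := by
    rw [hb, ha]; field_simp [hlam', hmu', hlm', h4]; ring
  have h2 : a * (mu * mu) + b * mu = f mu := by
    rw [hb, ha]; field_simp [hlam', hmu', hlm', h4]; ring
  have hfS : matFun f S = ((f lam : ℝ) : ℂ) • P + ((f mu : ℝ) : ℂ) • Q := by
    rw [matFun_congr hSh (g := fun x => a * (x * x) + b * x)
      (fun i => by rcases heigS i with h | h | h <;> rw [h]
                   · simp [hf0]
                   · exact h1.symm
                   · exact h2.symm),
      matFun_quad hSh a b, hS2, ← h1, ← h2]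
    push_cast
    module
  -- interpolation for deriv f
  set c : ℝ := deriv f 0 with hc
  set a' : ℝ := ((deriv f lam - c) / lam - (deriv f mu - c) / mu) / (lam - mu) with ha'
  set b' : ℝ := (deriv f lam - c) / lam - a' * lam with hb'
  have h1' : a' * (lam * lam) + b' * lam = deriv f lam - c := by
    rw [hb', ha']; field_simp [hlam', hmu', hlm', h4]; ring
  have h2' : a' * (mu * mu) + b' * mu = deriv f mu - c := by
    rw [hb', ha']; field_simp [hlam', hmu', hlm', h4]; ring
  have hdfS : matFun (deriv f) S =
      ((deriv f lam - c : ℝ) : ℂ) • P + ((deriv f mu - c : ℝ) : ℂ) • Q + (c : ℂ) • 1 := by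
    rw [matFun_congr hSh (g := fun x => (a' * (x * x) + b' * x) + c)
      (fun i => by rcases heigS i with h | h | h <;> rw [h]
                   · exact (by rw [hc]; ring : deriv f 0 = a' * (0 * 0) + b' * 0 + c)
                   · exact (by linarith [h1'] : deriv f lam = a' * (lam * lam) + b' * lam + c)
                   · exact (by linarith [h2'] : deriv f mu = a' * (mu * mu) + b' * mu + c)),
      matFun_add hSh (fun x => a' * (x * x) + b' * x) (fun _ => c),
      matFun_quad hSh a' b', matFun_const hSh, hS2, ← h1', ← h2']
    push_cast
    module
  have hfR : matFun f R = 0 := by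
    rw [matFun_congr hRh (g := fun _ => (0 : ℝ))
      (fun i => by rcases eigs_idem hRh hR2 i with h | h <;> rw [h]
                   · exact hf0
                   · exact hf1),
      matFun_const hRh]
    simp
  have htrP : P.trace = 1 := trace_idem_rankone hPh hP2 hPr
  have htrQ : Q.trace = 1 := trace_idem_rankone hQh hQ2 hQr
  have htrR : R.trace = 1 := trace_idem_rankone hRh hR2 hRr
  have htrS : S.trace = 1 := by
    rw [hSdef, Matrix.trace_add, Matrix.trace_smul, Matrix.trace_smul, htrP, htrQ,
      smul_eq_mul, smul_eq_mul, mul_one, mul_one]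
    exact_mod_cast congrArg (Complex.ofReal) hsum
  have hPS : P * S = (lam : ℂ) • P := by
    simp [hSdef, mul_add, mul_smul_comm, hP2, hPQ]
  have hQS : Q * S = (mu : ℂ) • Q := by
    simp [hSdef, mul_add, mul_smul_comm, hQ2, hQP]
  have hPRQR : (P * R).trace + (Q * R).trace = 1 := by
    have h := congrArg Matrix.trace hsupp
    rw [add_mul, Matrix.trace_add] at h
    rw [h, htrR]
  have hre : ((R * P).trace).re + ((R * Q).trace).re = 1 := by
    rw [Matrix.trace_mul_comm R P, Matrix.trace_mul_comm R Q, ← Complex.add_re, hPRQR]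
    simp
  rw [bregman, hfR, hfS, hdfS]
  rw [show ((deriv f lam - c : ℝ) : ℂ) • P + ((deriv f mu - c : ℝ) : ℂ) • Q + (c : ℂ) • 1 =
    ((deriv f lam - c : ℝ) : ℂ) • P + (((deriv f mu - c : ℝ) : ℂ) • Q + (c : ℂ) • 1) from by rw [add_assoc]]
  simp only [zero_sub, sub_mul, add_mul, smul_mul_assoc, Matrix.one_mul, mul_sub, hPS, hQS,
    Matrix.trace_sub, Matrix.trace_add, Matrix.trace_neg, Matrix.trace_smul, htrP, htrQ,
    htrR, htrS, smul_eq_mul, mul_one, Matrix.trace_mul_comm P R, Matrix.trace_mul_comm Q R]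
  simp only [Complex.sub_re, Complex.add_re, Complex.neg_re, Complex.mul_re,
    Complex.ofReal_re, Complex.ofReal_im, zero_mul, sub_zero]
  linear_combination c * hre - c * hsum
end

section
/- Let f be strictly convex and differentiable on (0,∞), P, Q mutually orthogonal rank-one projections, 0 < λ < μ < 1 with λ+μ = 1, and S = λP + μQ. Over all rank-one projections R with range contained in range(P)+range(Q), the map R ↦ H_f(R,S) attains its maximum value −f'(λ) + C uniquely at R = P and its minimum value −f'(μ) + C uniquely at R = Q, where C = λf'(λ) − f(λ) + μf'(μ) − f(μ). -/
open Matrix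
open scoped ComplexOrder

section Aux

variable {n : ℕ} {A P Q : Matrix (Fin n) (Fin n) ℂ}

private lemma matFun_quad_s5 (g : ℝ → ℝ) (hA : A.IsHermitian) (c₀ c₁ c₂ : ℝ)
    (h : ∀ i, g (hA.eigenvalues i) =
      c₀ + c₁ * hA.eigenvalues i + c₂ * (hA.eigenvalues i)^2) :
    matFun g A = (c₀:ℂ) • (1 : Matrix (Fin n) (Fin n) ℂ) + (c₁:ℂ) • A + (c₂:ℂ) • (A*A) := by
  set U : Matrix (Fin n) (Fin n) ℂ := (hA.eigenvectorUnitary : Matrix (Fin n) (Fin n) ℂ) with hUdef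
  have hUs : U * star U = 1 := hA.eigenvectorUnitary.2.2
  have hsU : star U * U = 1 := hA.eigenvectorUnitary.2.1
  set D : Matrix (Fin n) (Fin n) ℂ :=
    Matrix.diagonal (RCLike.ofReal ∘ hA.eigenvalues) with hDdef
  have hspec : A = U * D * star U := hA.spectral_theorem
  have hDg : Matrix.diagonal (fun i => (g (hA.eigenvalues i) : ℂ)) =
      (c₀:ℂ) • (1 : Matrix (Fin n) (Fin n) ℂ) + (c₁:ℂ) • D + (c₂:ℂ) • (D*D) := by
    rw [hDdef, diagonal_mul_diagonal]
    ext i j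
    rcases eq_or_ne i j with rfl | hij
    · simp only [Matrix.diagonal_apply_eq, Matrix.add_apply, Matrix.smul_apply,
        Matrix.one_apply_eq, Function.comp_apply, smul_eq_mul, mul_one]
      rw [h i]
      simp only [show (RCLike.ofReal : ℝ → ℂ) = Complex.ofReal from rfl]
      push_cast
      ring
    · simp [Matrix.diagonal_apply_ne _ hij, Matrix.one_apply_ne hij]
  have hAA : A * A = U * (D * D) * star U := by
    rw [hspec]
    rw [show U * D * star U * (U * D * star U) = U * (D * ((star U * U) * (D * star U))) by
      simp only [Matrix.mul_assoc]]
    rw [hsU, Matrix.one_mul]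
    simp [Matrix.mul_assoc]
  rw [matFun, dif_pos hA, hDg]
  rw [Matrix.mul_add, Matrix.mul_add, Matrix.add_mul, Matrix.add_mul]
  rw [Matrix.mul_smul, Matrix.mul_smul, Matrix.mul_smul, Matrix.smul_mul, Matrix.smul_mul,
    Matrix.smul_mul, Matrix.mul_one, hUs, ← hAA, ← hspec]

private lemma eig_cubic (hA : A.IsHermitian) (c d : ℝ)
    (h : A*A*A + (c:ℂ) • (A*A) + (d:ℂ) • A = 0) :
    ∀ i, (hA.eigenvalues i)^3 + c * (hA.eigenvalues i)^2 + d * hA.eigenvalues i = 0 := by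
  intro i
  set U : Matrix (Fin n) (Fin n) ℂ := (hA.eigenvectorUnitary : Matrix (Fin n) (Fin n) ℂ)
  have hUs : U * star U = 1 := hA.eigenvectorUnitary.2.2
  set D : Matrix (Fin n) (Fin n) ℂ :=
    Matrix.diagonal (RCLike.ofReal ∘ hA.eigenvalues) with hDdef
  have hD : star U * A * U = D := by
    have hsU : star U * U = 1 := hA.eigenvectorUnitary.2.1
    have hspec : A = U * D * star U := hA.spectral_theorem
    rw [hspec, show star U * (U * D * star U) * U = (star U * U) * D * (star U * U) by
      simp only [Matrix.mul_assoc], hsU, Matrix.one_mul, Matrix.mul_one]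
  have e1 : (star U * A * U) * (star U * A * U) = star U * (A * A) * U := by
    calc (star U * A * U) * (star U * A * U)
        = star U * A * ((U * star U) * (A * U)) := by simp only [Matrix.mul_assoc]
      _ = star U * (A * A) * U := by
          rw [hUs, Matrix.one_mul]; simp only [Matrix.mul_assoc]
  have e2 : (star U * (A * A) * U) * (star U * A * U) = star U * (A * A * A) * U := by
    calc (star U * (A * A) * U) * (star U * A * U)
        = star U * (A * A) * ((U * star U) * (A * U)) := by simp only [Matrix.mul_assoc]
      _ = star U * (A * A * A) * U := by
          rw [hUs, Matrix.one_mul]; simp only [Matrix.mul_assoc]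
  have hD2 : star U * (A*A) * U = D * D := by rw [← hD]; exact e1.symm
  have hD3 : star U * (A*A*A) * U = D * D * D := by
    rw [show D*D*D = (D*D)*D from rfl, ← hD2, ← hD]; exact e2.symm
  have key : D * D * D + (c:ℂ) • (D * D) + (d:ℂ) • D = 0 := by
    rw [← hD3, ← hD2, ← hD]
    have h0 : star U * (A*A*A + (c:ℂ) • (A*A) + (d:ℂ) • A) * U = 0 := by rw [h]; simp
    rw [Matrix.mul_add, Matrix.mul_add, Matrix.add_mul, Matrix.add_mul] at h0
    simpa [Matrix.mul_smul, Matrix.smul_mul] using h0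
  have h5 : (D * D * D + (c:ℂ) • (D * D) + (d:ℂ) • D) i i = (0 : Matrix (Fin n) (Fin n) ℂ) i i := by
    rw [key]
  simp only [hDdef, diagonal_mul_diagonal, Matrix.add_apply, Matrix.smul_apply,
    Matrix.diagonal_apply_eq, Function.comp_apply, smul_eq_mul, Matrix.zero_apply] at h5
  have h2 : ((hA.eigenvalues i)^3 + c * (hA.eigenvalues i)^2 + d * hA.eigenvalues i : ℂ) = 0 := by
    simp only [show (RCLike.ofReal : ℝ → ℂ) = Complex.ofReal from rfl] at h5
    rw [← h5]
    push_cast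
    ring
  exact_mod_cast h2

private lemma eig_proj (hP : P.IsHermitian) (hidem : P*P = P) :
    ∀ i, hP.eigenvalues i = 0 ∨ hP.eigenvalues i = 1 := by
  have h := eig_cubic hP (-1) 0 (by rw [hidem, hidem]; push_cast; simp)
  intro i
  have ht := h i
  set t := hP.eigenvalues i
  have : t^2 * (t - 1) = 0 := by ring_nf; ring_nf at ht; linarith
  rcases mul_eq_zero.mp this with h1 | h1
  · left; exact pow_eq_zero_iff (by norm_num) |>.mp h1
  · right; linarith

private lemma herm_trace (hP : P.IsHermitian) :
    P.trace = ((∑ i, hP.eigenvalues i : ℝ) : ℂ) := by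
  have hsU : star (hP.eigenvectorUnitary : Matrix (Fin n) (Fin n) ℂ) *
      (hP.eigenvectorUnitary : Matrix (Fin n) (Fin n) ℂ) = 1 := hP.eigenvectorUnitary.2.1
  conv_lhs => rw [hP.spectral_theorem, Unitary.conjStarAlgAut_apply]
  rw [Matrix.trace_mul_cycle, hsU, Matrix.one_mul, Matrix.trace_diagonal]
  simp only [show (RCLike.ofReal : ℝ → ℂ) = Complex.ofReal from rfl, Function.comp_apply]
  push_cast
  rfl

private lemma proj_trace (hP : P.IsHermitian) (hidem : P*P = P) (hrank : P.rank = 1) :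
    P.trace = 1 := by
  classical
  rw [herm_trace hP]
  have he := eig_proj hP hidem
  have hsum : ∑ i, hP.eigenvalues i =
      ((Finset.univ.filter (fun i => hP.eigenvalues i ≠ 0)).card : ℝ) := by
    rw [Finset.card_filter]
    push_cast
    apply Finset.sum_congr rfl
    intro i _
    rcases he i with h0 | h1
    · simp [h0]
    · simp [h1, (by rw [h1]; norm_num : hP.eigenvalues i ≠ 0)]
  rw [hsum]
  have hr := hP.rank_eq_card_non_zero_eigs
  rw [hrank] at hr
  rw [Fintype.card_subtype] at hr
  rw [← hr]
  norm_num

private lemma trace_ct (A : Matrix (Fin n) (Fin n) ℂ) :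
    (Aᴴ * A).trace = ((∑ i, ∑ j, Complex.normSq (A j i) : ℝ) : ℂ) := by
  simp only [Matrix.trace, Matrix.diag, Matrix.mul_apply, Matrix.conjTranspose_apply]
  push_cast
  congr 1
  funext i
  congr 1
  funext j
  rw [show (star (A j i)) = (starRingEnd ℂ) (A j i) from rfl,
    ← Complex.normSq_eq_conj_mul_self]

private lemma trace_ct_eq_zero {A : Matrix (Fin n) (Fin n) ℂ} (h : (Aᴴ * A).trace = 0) :
    A = 0 := by
  rw [trace_ct] at h
  norm_cast at h
  have : ∀ i ∈ Finset.univ, ∀ j ∈ Finset.univ, Complex.normSq (A j i) = 0 := by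
    intro i _ j _
    have h1 : ∀ i ∈ (Finset.univ : Finset (Fin n)), 0 ≤ ∑ j, Complex.normSq (A j i) := by
      intro i _; exact Finset.sum_nonneg fun j _ => Complex.normSq_nonneg _
    have h2 := (Finset.sum_eq_zero_iff_of_nonneg h1).mp h i (Finset.mem_univ i)
    have h3 : ∀ j ∈ (Finset.univ : Finset (Fin n)), 0 ≤ Complex.normSq (A j i) := by
      intro j _; exact Complex.normSq_nonneg _
    exact (Finset.sum_eq_zero_iff_of_nonneg h3).mp h2 j (Finset.mem_univ j)
  ext j i
  simpa using Complex.normSq_eq_zero.mp (this i (Finset.mem_univ i) j (Finset.mem_univ j))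

/-- Trace of a product of two Hermitian idempotents is a nonnegative real, and if it is
zero then the product vanishes. -/
private lemma trace_two_proj (hPh : P.IsHermitian) (hRh : A.IsHermitian)
    (hPP : P*P = P) (hRR : A*A = A) :
    ∃ p : ℝ, 0 ≤ p ∧ (P*A).trace = (p:ℂ) ∧ (p = 0 → A*P = 0) := by
  have h1 : ((A*P)ᴴ * (A*P)).trace = (P*A).trace := by
    rw [Matrix.conjTranspose_mul, hRh.eq, hPh.eq]
    have e : (P*A)*(A*P) = (P*(A*A))*P := by simp only [Matrix.mul_assoc]
    rw [e, hRR, Matrix.trace_mul_cycle, hPP]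
  refine ⟨∑ i, ∑ j, Complex.normSq ((A*P) j i),
    Finset.sum_nonneg fun i _ => Finset.sum_nonneg fun j _ => Complex.normSq_nonneg _,
    by rw [← h1, trace_ct], ?_⟩
  intro h0
  apply trace_ct_eq_zero (A := A*P)
  rw [trace_ct, h0]
  norm_num

private lemma matFun_two_proj (g : ℝ → ℝ) (hPh : P.IsHermitian) (hQh : Q.IsHermitian)
    (hPP : P*P = P) (hQQ : Q*Q = Q) (hPQ : P*Q = 0) (hQP : Q*P = 0)
    {lam mu : ℝ} (h0 : 0 < lam) (hlm : lam < mu)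
    (hS : ((lam:ℂ) • P + (mu:ℂ) • Q).IsHermitian) :
    matFun g ((lam:ℂ) • P + (mu:ℂ) • Q) =
      ((g 0 : ℝ):ℂ) • (1 : Matrix (Fin n) (Fin n) ℂ) +
        ((g lam - g 0 : ℝ):ℂ) • P + ((g mu - g 0 : ℝ):ℂ) • Q := by
  have hl0 : lam ≠ 0 := ne_of_gt h0
  have hm0 : mu ≠ 0 := ne_of_gt (h0.trans hlm)
  have hlm' : mu - lam ≠ 0 := sub_ne_zero.mpr (ne_of_gt hlm)
  set S : Matrix (Fin n) (Fin n) ℂ := (lam:ℂ) • P + (mu:ℂ) • Q with hSdef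
  have hS2 : S * S = ((lam:ℂ)^2) • P + ((mu:ℂ)^2) • Q := by
    rw [hSdef]
    simp only [Matrix.add_mul, Matrix.mul_add, Matrix.smul_mul, Matrix.mul_smul,
      hPP, hQQ, hPQ, hQP, smul_smul, smul_zero]
    module
  have hS3 : S * S * S = ((lam:ℂ)^3) • P + ((mu:ℂ)^3) • Q := by
    rw [hS2, hSdef]
    simp only [Matrix.add_mul, Matrix.mul_add, Matrix.smul_mul, Matrix.mul_smul,
      hPP, hQQ, hPQ, hQP, smul_smul, smul_zero]
    module
  have hcubic : S*S*S + ((-(lam+mu) : ℝ):ℂ) • (S*S) + ((lam*mu : ℝ):ℂ) • S = 0 := by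
    rw [hS3, hS2, hSdef]
    match_scalars <;> push_cast <;> ring
  have heig : ∀ i, hS.eigenvalues i = 0 ∨ hS.eigenvalues i = lam ∨ hS.eigenvalues i = mu := by
    intro i
    have ht := eig_cubic hS (-(lam+mu)) (lam*mu) hcubic i
    set t := hS.eigenvalues i
    have hfac : t * ((t - lam) * (t - mu)) = 0 := by ring_nf; ring_nf at ht; linarith
    rcases mul_eq_zero.mp hfac with h1 | h1
    · exact Or.inl h1
    · rcases mul_eq_zero.mp h1 with h2 | h2
      · exact Or.inr (Or.inl (by linarith))
      · exact Or.inr (Or.inr (by linarith))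
  set c2 : ℝ := ((g mu - g 0)/mu - (g lam - g 0)/lam)/(mu - lam) with hc2
  set c1 : ℝ := (g lam - g 0)/lam - c2*lam with hc1
  have hl : g 0 + c1 * lam + c2 * lam^2 = g lam := by rw [hc1, hc2]; field_simp; ring
  have hm : g 0 + c1 * mu + c2 * mu^2 = g mu := by rw [hc1, hc2]; field_simp; ring
  have := matFun_quad_s5 g hS (g 0) c1 c2 (fun i => by
    rcases heig i with h | h | h <;> rw [h] <;> [skip; linarith [hl]; linarith [hm]]
    simp)
  rw [this, hS2, hSdef]
  have hlC : ((g 0 : ℝ):ℂ) + (c1:ℂ)*(lam:ℂ) + (c2:ℂ)*(lam:ℂ)^2 = ((g lam : ℝ):ℂ) := by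
    exact_mod_cast hl
  have hmC : ((g 0 : ℝ):ℂ) + (c1:ℂ)*(mu:ℂ) + (c2:ℂ)*(mu:ℂ)^2 = ((g mu : ℝ):ℂ) := by
    exact_mod_cast hm
  match_scalars <;> push_cast <;> [ring; linear_combination hlC; linear_combination hmC]

end Aux

/-- over rank-one projections supported in `supp S`, the Bregman
divergence to `S = λP + μQ` is maximal exactly at `P` and minimal exactly at `Q`. -/
theorem bregman_rankOne_max_min {n : ℕ} (f : ℝ → ℝ)
    (hconv : StrictConvexOn ℝ (Set.Ioi 0) f)
    (hdiff : ∀ x ∈ Set.Ioi (0 : ℝ), DifferentiableAt ℝ f x)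
    (hf0 : f 0 = 0) (hf1 : f 1 = 0)
    (P Q : Matrix (Fin n) (Fin n) ℂ) (hP : IsRankOneProj P) (hQ : IsRankOneProj Q)
    (hPQ : P * Q = 0)
    (lam mu : ℝ) (hlam : 0 < lam) (hlm : lam < mu) (hmu : mu < 1) (hsum : lam + mu = 1) :
    ∀ R : Matrix (Fin n) (Fin n) ℂ, IsRankOneProj R → (P + Q) * R = R →
      (bregman f R ((lam : ℂ) • P + (mu : ℂ) • Q) ≤
          -(deriv f lam) + (lam * deriv f lam - f lam + mu * deriv f mu - f mu) ∧
        (bregman f R ((lam : ℂ) • P + (mu : ℂ) • Q) =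
            -(deriv f lam) + (lam * deriv f lam - f lam + mu * deriv f mu - f mu) ↔ R = P)) ∧
      (-(deriv f mu) + (lam * deriv f lam - f lam + mu * deriv f mu - f mu) ≤
          bregman f R ((lam : ℂ) • P + (mu : ℂ) • Q) ∧
        (bregman f R ((lam : ℂ) • P + (mu : ℂ) • Q) =
            -(deriv f mu) + (lam * deriv f lam - f lam + mu * deriv f mu - f mu) ↔ R = Q)) := by
  intro R hR hRsupp
  obtain ⟨hPh, hPP, hPrank⟩ := hP
  obtain ⟨hQh, hQQ, hQrank⟩ := hQ
  obtain ⟨hRh, hRR, hRrank⟩ := hR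
  have hQP : Q * P = 0 := by
    have := congrArg Matrix.conjTranspose hPQ
    simpa [Matrix.conjTranspose_mul, hPh.eq, hQh.eq] using this
  set S : Matrix (Fin n) (Fin n) ℂ := (lam:ℂ) • P + (mu:ℂ) • Q with hSdef
  have hS : S.IsHermitian := by
    rw [Matrix.IsHermitian, hSdef, Matrix.conjTranspose_add, Matrix.conjTranspose_smul,
      Matrix.conjTranspose_smul, hPh.eq, hQh.eq]
    norm_num [Complex.star_def, Complex.conj_ofReal]
  -- traces of the projections
  have htrP : P.trace = 1 := proj_trace hPh hPP hPrank
  have htrQ : Q.trace = 1 := proj_trace hQh hQQ hQrank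
  have htrR : R.trace = 1 := proj_trace hRh hRR hRrank
  have htrS : S.trace = 1 := by
    rw [hSdef, Matrix.trace_add, Matrix.trace_smul, Matrix.trace_smul, htrP, htrQ,
      smul_eq_mul, smul_eq_mul, mul_one, mul_one]
    exact_mod_cast congrArg (Complex.ofReal) hsum
  have hPS : P * S = (lam:ℂ) • P := by
    rw [hSdef]
    simp [Matrix.mul_add, Matrix.mul_smul, hPP, hPQ]
  have hQS : Q * S = (mu:ℂ) • Q := by
    rw [hSdef]
    simp [Matrix.mul_add, Matrix.mul_smul, hQQ, hQP]
  -- the overlap numbers p = tr(PR), q = tr(QR)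
  obtain ⟨p, hp0, hpTr, hpzero⟩ := trace_two_proj hPh hRh hPP hRR
  obtain ⟨q, hq0, hqTr, hqzero⟩ := trace_two_proj hQh hRh hQQ hRR
  have hpq : p + q = 1 := by
    have : (P*R).trace + (Q*R).trace = R.trace := by
      rw [← Matrix.trace_add, ← Matrix.add_mul, hRsupp]
    rw [hpTr, hqTr, htrR] at this
    exact_mod_cast this
  -- operator function values
  have hfS : matFun f S = ((f lam : ℝ):ℂ) • P + ((f mu : ℝ):ℂ) • Q := by
    have := matFun_two_proj f hPh hQh hPP hQQ hPQ hQP hlam hlm hS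
    rw [hf0] at this
    simpa [hSdef] using this
  set d0 : ℝ := deriv f 0 with hd0
  set dl : ℝ := deriv f lam with hdl
  set dm : ℝ := deriv f mu with hdm
  have hdS : matFun (deriv f) S = (d0:ℂ) • (1 : Matrix (Fin n) (Fin n) ℂ) +
      ((dl - d0 : ℝ):ℂ) • P + ((dm - d0 : ℝ):ℂ) • Q :=
    matFun_two_proj (deriv f) hPh hQh hPP hQQ hPQ hQP hlam hlm hS
  have hfR : matFun f R = 0 := by
    have := matFun_quad_s5 f hRh 0 0 0 (fun i => by
      rcases eig_proj hRh hRR i with h | h <;> simp [h, hf0, hf1])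
    simpa using this
  -- the trace formula
  have htr : (matFun f R - matFun f S - matFun (deriv f) S * (R - S)).trace
      = ((-(f lam) - f mu - dl*(p - lam) - dm*(q - mu) : ℝ) : ℂ) := by
    rw [hfR, hfS, hdS]
    rw [Matrix.add_mul, Matrix.add_mul, Matrix.smul_mul, Matrix.smul_mul, Matrix.smul_mul,
      Matrix.one_mul, Matrix.mul_sub, Matrix.mul_sub, hPS, hQS]
    simp only [Matrix.trace_sub, Matrix.trace_add, Matrix.trace_smul, Matrix.trace_zero,
      hpTr, hqTr, htrP, htrQ, htrR, htrS]
    have hpqC : (p:ℂ) + (q:ℂ) = 1 := by exact_mod_cast hpq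
    have hsumC : (lam:ℂ) + (mu:ℂ) = 1 := by exact_mod_cast hsum
    simp only [smul_eq_mul]
    push_cast
    linear_combination (d0:ℂ) * hpqC - (d0:ℂ) * hsumC
  have hbreg : bregman f R S = -(f lam) - f mu - dl*(p - lam) - dm*(q - mu) := by
    rw [bregman, htr, Complex.ofReal_re]
  -- strict monotonicity of the derivative
  have hd : dl < dm :=
    hconv.strictMonoOn_deriv hdiff (Set.mem_Ioi.mpr hlam)
      (Set.mem_Ioi.mpr (hlam.trans hlm)) hlm
  -- equality characterizations
  have hqR : q = 0 ↔ R = P := by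
    constructor
    · intro h0
      have hRQ : R * Q = 0 := hqzero h0
      have hQR : Q * R = 0 := by
        have := congrArg Matrix.conjTranspose hRQ
        simpa [Matrix.conjTranspose_mul, hQh.eq, hRh.eq] using this
      have hPR : P * R = R := by
        have := hRsupp
        rw [Matrix.add_mul, hQR, add_zero] at this
        exact this
      have hRP : R * P = R := by
        have := congrArg Matrix.conjTranspose hPR
        simpa [Matrix.conjTranspose_mul, hPh.eq, hRh.eq] using this
      have hDD : (P - R)ᴴ * (P - R) = P - R := by
        rw [Matrix.conjTranspose_sub, hPh.eq, hRh.eq, Matrix.sub_mul, Matrix.mul_sub,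
          Matrix.mul_sub, hPP, hRR, hPR, hRP]
        abel
      have hzero : ((P - R)ᴴ * (P - R)).trace = 0 := by
        rw [hDD, Matrix.trace_sub, htrP, htrR, sub_self]
      have := trace_ct_eq_zero hzero
      have := sub_eq_zero.mp this
      exact this.symm
    · intro h0
      subst h0
      have : (Q*R).trace = 0 := by rw [hQP, Matrix.trace_zero]
      rw [hqTr] at this
      exact_mod_cast this
  have hpR : p = 0 ↔ R = Q := by
    constructor
    · intro h0
      have hRP : R * P = 0 := hpzero h0
      have hPR : P * R = 0 := by
        have := congrArg Matrix.conjTranspose hRP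
        simpa [Matrix.conjTranspose_mul, hPh.eq, hRh.eq] using this
      have hQR : Q * R = R := by
        have := hRsupp
        rw [Matrix.add_mul, hPR, zero_add] at this
        exact this
      have hRQ : R * Q = R := by
        have := congrArg Matrix.conjTranspose hQR
        simpa [Matrix.conjTranspose_mul, hQh.eq, hRh.eq] using this
      have hDD : (Q - R)ᴴ * (Q - R) = Q - R := by
        rw [Matrix.conjTranspose_sub, hQh.eq, hRh.eq, Matrix.sub_mul, Matrix.mul_sub,
          Matrix.mul_sub, hQQ, hRR, hQR, hRQ]
        abel
      have hzero : ((Q - R)ᴴ * (Q - R)).trace = 0 := by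
        rw [hDD, Matrix.trace_sub, htrQ, htrR, sub_self]
      have := trace_ct_eq_zero hzero
      have := sub_eq_zero.mp this
      exact this.symm
    · intro h0
      subst h0
      have : (P*R).trace = 0 := by rw [hPQ, Matrix.trace_zero]
      rw [hpTr] at this
      exact_mod_cast this
  -- final arithmetic
  have hz1 : dl * (p + q - 1) = 0 := by
    have : p + q - 1 = 0 := by linarith
    rw [this, mul_zero]
  have hz2 : dm * (p + q - 1) = 0 := by
    have : p + q - 1 = 0 := by linarith
    rw [this, mul_zero]
  refine ⟨⟨?_, ?_, ?_⟩, ?_, ?_, ?_⟩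
  · rw [hbreg]
    nlinarith [mul_nonneg (sub_nonneg.mpr hd.le) hq0, hz1]
  · intro h
    apply hqR.mp
    have h2 : (dm - dl) * q = 0 := by linear_combination hbreg - h - dl*hpq
    rcases mul_eq_zero.mp h2 with h3 | h3
    · exact absurd h3 (sub_ne_zero.mpr (ne_of_gt hd))
    · exact h3
  · intro h
    have hq' : q = 0 := hqR.mpr h
    have hp' : p = 1 := by linarith
    rw [hbreg, hq', hp']
    ring
  · rw [hbreg]
    nlinarith [mul_nonneg (sub_nonneg.mpr hd.le) hp0, hz2]
  · intro h
    apply hpR.mp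
    have h2 : (dm - dl) * p = 0 := by linear_combination h - hbreg + dm*hpq
    rcases mul_eq_zero.mp h2 with h3 | h3
    · exact absurd h3 (sub_ne_zero.mpr (ne_of_gt hd))
    · exact h3
  · intro h
    have hp' : p = 0 := hpR.mpr h
    have hq' : q = 1 := by linarith
    rw [hbreg, hp', hq']
    ring
end

section
/- Let f be strictly convex and continuous on [0,∞) with f(0) = f(1) = 0. Then over all pairs of rank-one projections P, Q on a finite-dimensional Hilbert space of dimension ≥ 2, the Jensen f-divergence satisfies J_f(P,Q) ≤ −2 f(½), with equality if and only if PQ = 0. -/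
open Matrix
open scoped ComplexOrder

section Aux

variable {n : ℕ}

lemma aux_sandwich (U : Matrix.unitaryGroup (Fin n) ℂ) (A B : Matrix (Fin n) (Fin n) ℂ) :
    (star (U : Matrix (Fin n) (Fin n) ℂ) * A * U) * (star (U : Matrix (Fin n) (Fin n) ℂ) * B * U)
      = star (U : Matrix (Fin n) (Fin n) ℂ) * (A * B) * U := by
  have h : (U : Matrix (Fin n) (Fin n) ℂ) * star (U : Matrix (Fin n) (Fin n) ℂ) = 1 :=
    Unitary.coe_mul_star_self U
  calc (star (U : Matrix (Fin n) (Fin n) ℂ) * A * U) * (star (U : Matrix (Fin n) (Fin n) ℂ) * B * U)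
      = star (U : Matrix (Fin n) (Fin n) ℂ) * A * ((U * star (U : Matrix (Fin n) (Fin n) ℂ)) * (B * U)) := by
        simp only [Matrix.mul_assoc]
    _ = star (U : Matrix (Fin n) (Fin n) ℂ) * (A * B) * U := by
        rw [h, one_mul]; simp only [Matrix.mul_assoc]

lemma aux_trace_conj {A : Matrix (Fin n) (Fin n) ℂ} (hA : A.IsHermitian)
    (D : Matrix (Fin n) (Fin n) ℂ) :
    ((hA.eigenvectorUnitary : Matrix (Fin n) (Fin n) ℂ) * D *
      star (hA.eigenvectorUnitary : Matrix (Fin n) (Fin n) ℂ)).trace = D.trace := by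
  rw [Matrix.trace_mul_cycle, Unitary.coe_star_mul_self, one_mul]

lemma trace_matFun (f : ℝ → ℝ) {A : Matrix (Fin n) (Fin n) ℂ} (hA : A.IsHermitian) :
    (matFun f A).trace = ((∑ i, f (hA.eigenvalues i) : ℝ) : ℂ) := by
  rw [matFun, dif_pos hA, aux_trace_conj hA, Matrix.trace_diagonal]
  push_cast
  rfl

lemma trace_eq_sum_eigen {A : Matrix (Fin n) (Fin n) ℂ} (hA : A.IsHermitian) :
    A.trace = ((∑ i, hA.eigenvalues i : ℝ) : ℂ) := by
  conv_lhs => rw [hA.spectral_theorem, Unitary.conjStarAlgAut_apply]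
  rw [aux_trace_conj hA, Matrix.trace_diagonal]
  push_cast
  rfl

lemma trace_sq_eq_sum_eigen_sq {A : Matrix (Fin n) (Fin n) ℂ} (hA : A.IsHermitian) :
    (A * A).trace = ((∑ i, (hA.eigenvalues i) ^ 2 : ℝ) : ℂ) := by
  have h : (star (hA.eigenvectorUnitary : Matrix (Fin n) (Fin n) ℂ) * A *
      (hA.eigenvectorUnitary : Matrix (Fin n) (Fin n) ℂ) = diagonal (RCLike.ofReal ∘ hA.eigenvalues)) := by
    have := hA.conjStarAlgAut_star_eigenvectorUnitary
    rwa [Unitary.conjStarAlgAut_star_apply] at this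
  have h2 := aux_sandwich hA.eigenvectorUnitary A A
  rw [h, Matrix.diagonal_mul_diagonal] at h2
  have h3 : (star (hA.eigenvectorUnitary : Matrix (Fin n) (Fin n) ℂ) * (A * A)
      * (hA.eigenvectorUnitary : Matrix (Fin n) (Fin n) ℂ)).trace = (A * A).trace := by
    have hU : (hA.eigenvectorUnitary : Matrix (Fin n) (Fin n) ℂ) *
        star (hA.eigenvectorUnitary : Matrix (Fin n) (Fin n) ℂ) = 1 :=
      Unitary.coe_mul_star_self _
    rw [Matrix.trace_mul_cycle, hU, one_mul]
  rw [← h3, ← h2, Matrix.trace_diagonal]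
  push_cast
  simp [Function.comp, pow_two]

lemma eigen_rel {A : Matrix (Fin n) (Fin n) ℂ} (hA : A.IsHermitian) {c : ℂ}
    (h : A * A = c • A) (i : Fin n) :
    ((hA.eigenvalues i : ℂ)) ^ 2 = c * (hA.eigenvalues i : ℂ) := by
  have h1 : (star (hA.eigenvectorUnitary : Matrix (Fin n) (Fin n) ℂ) * A *
      (hA.eigenvectorUnitary : Matrix (Fin n) (Fin n) ℂ) = diagonal (RCLike.ofReal ∘ hA.eigenvalues)) := by
    have := hA.conjStarAlgAut_star_eigenvectorUnitary
    rwa [Unitary.conjStarAlgAut_star_apply] at this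
  have h2 := aux_sandwich hA.eigenvectorUnitary A A
  rw [h1, Matrix.diagonal_mul_diagonal, h, Matrix.mul_smul, Matrix.smul_mul, h1] at h2
  have h3 := congrFun (congrFun h2 i) i
  simpa [pow_two, Matrix.diagonal_apply_eq, Function.comp] using h3

lemma proj_eigen {P : Matrix (Fin n) (Fin n) ℂ} (hP : P.IsHermitian) (hPP : P * P = P)
    (i : Fin n) : hP.eigenvalues i = 0 ∨ hP.eigenvalues i = 1 := by
  have h := eigen_rel hP (c := 1) (by rw [one_smul]; exact hPP) i
  rw [one_mul] at h
  have h2 : (hP.eigenvalues i) ^ 2 = hP.eigenvalues i := by exact_mod_cast h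
  have h3 : hP.eigenvalues i * (hP.eigenvalues i - 1) = 0 := by nlinarith [h2]
  rcases mul_eq_zero.mp h3 with h4 | h4
  · exact Or.inl h4
  · exact Or.inr (by linarith)

lemma proj_sum_eigen {P : Matrix (Fin n) (Fin n) ℂ} (hP : P.IsHermitian) (hPP : P * P = P)
    (hrank : P.rank = 1) : ∑ i, hP.eigenvalues i = 1 := by
  classical
  have hcard : (Finset.univ.filter fun i => hP.eigenvalues i ≠ 0).card = 1 := by
    rw [← Fintype.card_subtype, ← hP.rank_eq_card_non_zero_eigs]
    exact hrank
  have h1 : ∑ i, hP.eigenvalues i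
      = ∑ i ∈ (Finset.univ.filter fun i => hP.eigenvalues i ≠ 0), hP.eigenvalues i := by
    refine (Finset.sum_subset (Finset.subset_univ _) ?_).symm
    intro i _ hi
    by_contra hne
    exact hi (Finset.mem_filter.mpr ⟨Finset.mem_univ i, hne⟩)
  rw [h1, Finset.sum_congr rfl (fun i hi => ?_), Finset.sum_const, hcard, one_smul]
  rcases proj_eigen hP hPP i with h | h
  · exact absurd h (Finset.mem_filter.mp hi).2
  · exact h

lemma trace_conjTranspose_mul_self (A : Matrix (Fin n) (Fin n) ℂ) :
    (Aᴴ * A).trace = ((∑ i, ∑ j, Complex.normSq (A i j) : ℝ) : ℂ) := by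
  push_cast
  rw [Finset.sum_comm]
  simp only [Matrix.trace, Matrix.diag, Matrix.mul_apply, Matrix.conjTranspose_apply]
  refine Finset.sum_congr rfl fun i _ => Finset.sum_congr rfl fun j _ => ?_
  rw [Complex.normSq_eq_conj_mul_self]
  rfl

end Aux
lemma key_half_neg {f : ℝ → ℝ} (hconv : StrictConvexOn ℝ (Set.Ici 0) f)
    (hf0 : f 0 = 0) (hf1 : f 1 = 0) : f (1/2) < 0 := by
  have h := hconv.2 (Set.self_mem_Ici (a := (0:ℝ)))
    (show (1:ℝ) ∈ Set.Ici (0:ℝ) by norm_num) (by norm_num)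
    (by norm_num : (0:ℝ) < 1/2) (by norm_num : (0:ℝ) < 1/2) (by norm_num)
  simp only [smul_eq_mul, mul_zero, mul_one, zero_add, hf0, hf1] at h
  linarith

lemma key_mid {f : ℝ → ℝ} (hconv : StrictConvexOn ℝ (Set.Ici 0) f)
    {a b : ℝ} (ha : 0 ≤ a) (hb : 0 ≤ b) : 2 * f ((a + b)/2) ≤ f a + f b := by
  rcases eq_or_ne a b with rfl | hab
  · have h : (a + a)/2 = a := by ring
    rw [h]; linarith
  · have h := hconv.2 ha hb hab (by norm_num : (0:ℝ) < 1/2) (by norm_num : (0:ℝ) < 1/2) (by norm_num)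
    simp only [smul_eq_mul] at h
    have h2 : (1:ℝ)/2 * a + 1/2 * b = (a + b)/2 := by ring
    rw [h2] at h
    linarith

lemma key_mid_strict {f : ℝ → ℝ} (hconv : StrictConvexOn ℝ (Set.Ici 0) f)
    {a b : ℝ} (ha : 0 ≤ a) (hb : 0 ≤ b) (hab : a ≠ b) :
    2 * f ((a + b)/2) < f a + f b := by
  have h := hconv.2 ha hb hab (by norm_num : (0:ℝ) < 1/2) (by norm_num : (0:ℝ) < 1/2) (by norm_num)
  simp only [smul_eq_mul] at h
  have h2 : (1:ℝ)/2 * a + 1/2 * b = (a + b)/2 := by ring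
  rw [h2] at h
  linarith

lemma key_sum {n : ℕ} {f : ℝ → ℝ} (hconv : StrictConvexOn ℝ (Set.Ici 0) f)
    (hf0 : f 0 = 0) (hf1 : f 1 = 0) (μ : Fin n → ℝ) (hnn : ∀ i, 0 ≤ μ i)
    (hsum : ∑ i, μ i = 1)
    (hcard : (Finset.univ.filter fun i => μ i ≠ 0).card ≤ 2) :
    2 * f (1/2) ≤ ∑ i, f (μ i) ∧
      (∑ i, f (μ i) = 2 * f (1/2) → ∑ i, (μ i)^2 = 1/2) := by
  classical
  set S := Finset.univ.filter fun i => μ i ≠ 0 with hSdef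
  have hrestrict : ∀ g : ℝ → ℝ, g 0 = 0 → ∑ i, g (μ i) = ∑ i ∈ S, g (μ i) := by
    intro g hg
    refine (Finset.sum_subset (Finset.subset_univ S) ?_).symm
    intro i _ hi
    have : μ i = 0 := by
      by_contra hne
      exact hi (Finset.mem_filter.mpr ⟨Finset.mem_univ i, hne⟩)
    rw [this, hg]
  have hsum' : ∑ i ∈ S, μ i = 1 := by
    rw [← hrestrict (fun x => x) rfl]; exact hsum
  have hhalf := key_half_neg hconv hf0 hf1
  have hcases : S.card = 0 ∨ S.card = 1 ∨ S.card = 2 := by omega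
  rcases hcases with h0 | h1 | h2
  · exfalso
    rw [Finset.card_eq_zero] at h0
    rw [h0, Finset.sum_empty] at hsum'
    norm_num at hsum'
  · obtain ⟨i, hi⟩ := Finset.card_eq_one.mp h1
    rw [hi, Finset.sum_singleton] at hsum'
    have hfs : ∑ j, f (μ j) = 0 := by
      rw [hrestrict f hf0, hi, Finset.sum_singleton, hsum', hf1]
    constructor
    · rw [hfs]; linarith
    · intro heq; rw [hfs] at heq; exfalso; linarith
  · obtain ⟨i, j, hij, hS⟩ := Finset.card_eq_two.mp h2
    rw [hS, Finset.sum_pair hij] at hsum'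
    have hfs : ∑ k, f (μ k) = f (μ i) + f (μ j) := by
      rw [hrestrict f hf0, hS, Finset.sum_pair hij]
    have hmid := key_mid hconv (hnn i) (hnn j)
    rw [hsum'] at hmid
    constructor
    · rw [hfs]; linarith
    · intro heq
      rw [hfs] at heq
      have hab : μ i = μ j := by
        by_contra hne
        have := key_mid_strict hconv (hnn i) (hnn j) hne
        rw [hsum'] at this
        linarith
      have hhalfval : μ i = 1/2 := by rw [hab] at hsum'; linarith
      have hsq : ∑ k, (μ k)^2 = (μ i)^2 + (μ j)^2 := by
        rw [hrestrict (fun x => x^2) (by norm_num), hS, Finset.sum_pair hij]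
      rw [hsq, hhalfval, ← hab, hhalfval]
      norm_num

lemma key_eq {n : ℕ} {f : ℝ → ℝ} (hf0 : f 0 = 0) (μ : Fin n → ℝ)
    (hval : ∀ i, μ i = 0 ∨ μ i = 1/2) (hsum : ∑ i, μ i = 1) :
    ∑ i, f (μ i) = 2 * f (1/2) := by
  have h : ∀ i, f (μ i) = (2 * f (1/2)) * μ i := by
    intro i
    rcases hval i with h | h <;> rw [h]
    · rw [hf0]; ring
    · ring
  rw [Finset.sum_congr rfl (fun i _ => h i), ← Finset.mul_sum, hsum, mul_one]

/-- `J_f(P,Q) ≤ -2 f(1/2)` for rank-one projections, with equality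
iff `PQ = 0`. -/
theorem jensen_rankOne_max {n : ℕ} (hn : 2 ≤ n) (f : ℝ → ℝ)
    (hconv : StrictConvexOn ℝ (Set.Ici 0) f)
    (hcont : ContinuousOn f (Set.Ici 0))
    (hf0 : f 0 = 0) (hf1 : f 1 = 0)
    (P Q : Matrix (Fin n) (Fin n) ℂ) (hP : IsRankOneProj P) (hQ : IsRankOneProj Q) :
    jensen f P Q ≤ -2 * f (1/2) ∧ (jensen f P Q = -2 * f (1/2) ↔ P * Q = 0) := by
  classical
  obtain ⟨hPh, hPP, hPrank⟩ := hP
  obtain ⟨hQh, hQQ, hQrank⟩ := hQ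
  set M : Matrix (Fin n) (Fin n) ℂ := (1/2 : ℂ) • (P + Q) with hMdef
  have hMH : M.IsHermitian := by
    rw [Matrix.IsHermitian, hMdef, Matrix.conjTranspose_smul, Matrix.conjTranspose_add,
      hPh.eq, hQh.eq]
    norm_num
  set μ : Fin n → ℝ := hMH.eigenvalues with hμdef
  -- traces of P and Q
  have htrP : P.trace = 1 := by
    rw [trace_eq_sum_eigen hPh, proj_sum_eigen hPh hPP hPrank]; norm_num
  have htrQ : Q.trace = 1 := by
    rw [trace_eq_sum_eigen hQh, proj_sum_eigen hQh hQQ hQrank]; norm_num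
  -- sum of eigenvalues of M is one
  have htrM : M.trace = 1 := by
    rw [hMdef, Matrix.trace_smul, Matrix.trace_add, htrP, htrQ]
    norm_num
  have hsumμ : ∑ i, μ i = 1 := by
    have h := trace_eq_sum_eigen hMH
    rw [htrM] at h
    exact_mod_cast h.symm
  -- eigenvalues of M are nonnegative
  have hPpsd : P.PosSemidef := by
    have h := Matrix.posSemidef_conjTranspose_mul_self P
    rwa [hPh.eq, hPP] at h
  have hQpsd : Q.PosSemidef := by
    have h := Matrix.posSemidef_conjTranspose_mul_self Q
    rwa [hQh.eq, hQQ] at h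
  have hMpsd : M.PosSemidef := by
    refine ⟨hMH, fun x => ?_⟩
    rw [hMdef]
    have h0 : (0:ℂ) ≤ (1/2 : ℂ) := by
      rw [show ((1:ℂ)/2) = ((1/2 : ℝ) : ℂ) by norm_num]
      exact_mod_cast (by norm_num : (0:ℝ) ≤ 1/2)
    have h1 := (hPpsd.add hQpsd).2 x
    exact ((hPpsd.add hQpsd).smul h0).2 x
  have hnn : ∀ i, 0 ≤ μ i := fun i => hMpsd.eigenvalues_nonneg i
  -- rank of M is at most two
  have hrankM : M.rank ≤ 2 := by
    have hsub : LinearMap.range M.mulVecLin ≤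
        LinearMap.range P.mulVecLin ⊔ LinearMap.range Q.mulVecLin := by
      rintro y ⟨x, rfl⟩
      have hy : M.mulVecLin x = (1/2 : ℂ) • (P.mulVecLin x + Q.mulVecLin x) := by
        simp [hMdef, Matrix.add_mulVec, Matrix.smul_mulVec]
      rw [hy]
      exact Submodule.smul_mem _ _ (Submodule.add_mem _
        (Submodule.mem_sup_left ⟨x, rfl⟩) (Submodule.mem_sup_right ⟨x, rfl⟩))
    calc M.rank ≤ Module.finrank ℂ
          ↥(LinearMap.range P.mulVecLin ⊔ LinearMap.range Q.mulVecLin) :=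
        Submodule.finrank_mono hsub
      _ ≤ P.rank + Q.rank := Submodule.finrank_add_le_finrank_add_finrank _ _
      _ = 2 := by rw [hPrank, hQrank]
  have hcard : (Finset.univ.filter fun i => μ i ≠ 0).card ≤ 2 := by
    calc (Finset.univ.filter fun i => μ i ≠ 0).card
        = Fintype.card {i // μ i ≠ 0} := (Fintype.card_subtype _).symm
      _ = M.rank := hMH.rank_eq_card_non_zero_eigs.symm
      _ ≤ 2 := hrankM
  -- the quantity t = tr(PQ)
  set t : ℝ := ∑ i, ∑ j, Complex.normSq ((P * Q) i j) with htdef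
  have htrPQ : (P * Q).trace = (t : ℂ) := by
    have h1 : (P * Q)ᴴ * (P * Q) = Q * (P * Q) := by
      rw [Matrix.conjTranspose_mul, hPh.eq, hQh.eq, Matrix.mul_assoc Q P (P * Q),
        ← Matrix.mul_assoc P P Q, hPP]
    have h2 : (Q * (P * Q)).trace = (P * Q).trace := by
      rw [Matrix.trace_mul_comm Q (P * Q), Matrix.mul_assoc, hQQ]
    rw [← h2, ← h1, trace_conjTranspose_mul_self]
  have ht_nonneg : 0 ≤ t :=
    Finset.sum_nonneg fun i _ => Finset.sum_nonneg fun j _ => Complex.normSq_nonneg _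
  have ht_zero_iff : t = 0 ↔ P * Q = 0 := by
    constructor
    · intro h
      ext i j
      have h1 := (Finset.sum_eq_zero_iff_of_nonneg
        (fun i _ => Finset.sum_nonneg fun j _ => Complex.normSq_nonneg ((P * Q) i j))).mp h
        i (Finset.mem_univ i)
      have h2 := (Finset.sum_eq_zero_iff_of_nonneg
        (fun j _ => Complex.normSq_nonneg ((P * Q) i j))).mp h1 j (Finset.mem_univ j)
      simpa using Complex.normSq_eq_zero.mp h2
    · intro h
      rw [htdef, h]
      simp
  -- sum of squares of eigenvalues of M
  have hMM : M * M = (1/4 : ℂ) • (P * P + P * Q + (Q * P + Q * Q)) := by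
    rw [hMdef, Matrix.smul_mul, Matrix.mul_smul, smul_smul, Matrix.add_mul,
      Matrix.mul_add, Matrix.mul_add]
    norm_num
  have hsumsq : ∑ i, (μ i) ^ 2 = (1 + t) / 2 := by
    have h := trace_sq_eq_sum_eigen_sq hMH
    rw [hMM] at h
    rw [Matrix.trace_smul, Matrix.trace_add, Matrix.trace_add, Matrix.trace_add,
      hPP, hQQ, htrP, htrQ, Matrix.trace_mul_comm Q P, htrPQ] at h
    have h2 : ((∑ i, (μ i) ^ 2 : ℝ) : ℂ) = (((1 + t) / 2 : ℝ) : ℂ) := by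
      rw [← h]
      push_cast
      simp only [smul_eq_mul]
      ring
    exact_mod_cast h2
  -- value of the Jensen divergence
  have hSP : ∑ i, f (hPh.eigenvalues i) = 0 := Finset.sum_eq_zero fun i _ => by
    rcases proj_eigen hPh hPP i with h | h <;> rw [h] <;> assumption
  have hSQ : ∑ i, f (hQh.eigenvalues i) = 0 := Finset.sum_eq_zero fun i _ => by
    rcases proj_eigen hQh hQQ i with h | h <;> rw [h] <;> assumption
  have hjen : jensen f P Q = -(∑ i, f (μ i)) := by
    rw [jensen, ← hMdef, Matrix.trace_sub, Matrix.trace_smul, Matrix.trace_add,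
      trace_matFun f hPh, trace_matFun f hQh, trace_matFun f hMH, hSP, hSQ]
    simp
    rfl
  have hkey := key_sum hconv hf0 hf1 μ hnn hsumμ hcard
  constructor
  · rw [hjen]
    linarith [hkey.1]
  · constructor
    · intro h
      rw [hjen] at h
      have heq : ∑ i, f (μ i) = 2 * f (1/2) := by linarith
      have hsq := hkey.2 heq
      rw [hsumsq] at hsq
      have ht0 : t = 0 := by linarith
      exact ht_zero_iff.mp ht0
    · intro hPQ0
      have hQP0 : Q * P = 0 := by
        have h := congrArg Matrix.conjTranspose hPQ0
        rw [Matrix.conjTranspose_mul, hPh.eq, hQh.eq] at h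
        simpa using h
      have hMM2 : M * M = (1/2 : ℂ) • M := by
        rw [hMM, hPQ0, hQP0, hPP, hQQ, hMdef]
        rw [smul_smul]
        norm_num
      have hval : ∀ i, μ i = 0 ∨ μ i = 1/2 := by
        intro i
        have h := eigen_rel hMH hMM2 i
        have h2 : (μ i) ^ 2 = 1/2 * μ i := by
          rw [hμdef]
          rw [show ((1:ℂ)/2) = ((1/2 : ℝ) : ℂ) by norm_num] at h
          exact_mod_cast h
        have h3 : μ i * (μ i - 1/2) = 0 := by nlinarith [h2]
        rcases mul_eq_zero.mp h3 with h4 | h4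
        · exact Or.inl h4
        · exact Or.inr (by linarith)
      rw [hjen, key_eq hf0 μ hval hsumμ]
      ring
end

section
/- Let f be strictly convex, continuous on [0,∞), with f(0)=f(1)=0, and suppose the Jensen f-divergence J_f is jointly convex on pairs of density operators. Then for all density operators A, B on a finite-dimensional complex Hilbert space of dimension ≥ 2, J_f(A,B) ≤ −2f(½), and if J_f(A,B) = −2f(½) then AB = 0. -/
open Matrix
open scoped ComplexOrder

/-- A density operator: positive semidefinite with unit trace. -/
def IsDensity {n : ℕ} (A : Matrix (Fin n) (Fin n) ℂ) : Prop :=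
  A.PosSemidef ∧ A.trace = 1

namespace JAux
variable {n : ℕ}

lemma conj_mul_conj {U X Y : Matrix (Fin n) (Fin n) ℂ} (hU : star U * U = 1) :
    (U * X * star U) * (U * Y * star U) = U * (X * Y) * star U := by
  calc (U * X * star U) * (U * Y * star U)
      = U * (X * ((star U * U) * (Y * star U))) := by
        simp only [Matrix.mul_assoc]
    _ = U * (X * Y) * star U := by
        rw [hU, one_mul]; simp only [Matrix.mul_assoc]

lemma trace_conj {U X : Matrix (Fin n) (Fin n) ℂ} (hU : star U * U = 1) :
    (U * X * star U).trace = X.trace := by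
  rw [Matrix.trace_mul_cycle, hU, one_mul]

lemma trace_eq_sum_eigenvalues {A : Matrix (Fin n) (Fin n) ℂ} (hA : A.IsHermitian) :
    A.trace = ∑ i, (hA.eigenvalues i : ℂ) := by
  conv_lhs => rw [hA.spectral_theorem, Unitary.conjStarAlgAut_apply]
  rw [trace_conj (Unitary.coe_star_mul_self _), Matrix.trace_diagonal]
  rfl

lemma trace_matFun (f : ℝ → ℝ) {A : Matrix (Fin n) (Fin n) ℂ} (hA : A.IsHermitian) :
    (matFun f A).trace = ∑ i, (f (hA.eigenvalues i) : ℂ) := by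
  rw [matFun, dif_pos hA, trace_conj (Unitary.coe_star_mul_self _), Matrix.trace_diagonal]

lemma trace_sq {A : Matrix (Fin n) (Fin n) ℂ} (hA : A.IsHermitian) :
    (A * A).trace = ∑ i, ((hA.eigenvalues i : ℂ))^2 := by
  have h : A * A =
      (hA.eigenvectorUnitary : Matrix (Fin n) (Fin n) ℂ) *
        (Matrix.diagonal (RCLike.ofReal ∘ hA.eigenvalues) *
          Matrix.diagonal (RCLike.ofReal ∘ hA.eigenvalues)) *
        star (hA.eigenvectorUnitary : Matrix (Fin n) (Fin n) ℂ) := by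
    conv_lhs => rw [hA.spectral_theorem, Unitary.conjStarAlgAut_apply]
    exact conj_mul_conj (Unitary.coe_star_mul_self _)
  rw [h, trace_conj (Unitary.coe_star_mul_self _), Matrix.diagonal_mul_diagonal,
    Matrix.trace_diagonal]
  simp [pow_two]


lemma proj_eig {P : Matrix (Fin n) (Fin n) ℂ} (hP : IsRankOneProj P) :
    ∃ i0, hP.1.eigenvalues i0 = 1 ∧ ∀ j, j ≠ i0 → hP.1.eigenvalues j = 0 := by
  obtain ⟨hPh, hid, hr⟩ := hP
  have hcard : Fintype.card {i // hPh.eigenvalues i ≠ 0} = 1 := by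
    rw [← hPh.rank_eq_card_non_zero_eigs]; exact hr
  obtain ⟨⟨i0, hi0⟩, huniq⟩ := Fintype.card_eq_one_iff.mp hcard
  have hzero : ∀ j, j ≠ i0 → hPh.eigenvalues j = 0 := by
    intro j hj
    by_contra hne
    exact hj (congrArg Subtype.val (huniq ⟨j, hne⟩))
  have h1 : (P * P).trace = P.trace := by rw [hid]
  rw [trace_sq hPh, trace_eq_sum_eigenvalues hPh] at h1
  rw [Finset.sum_eq_single i0 (fun b _ hb => by rw [hzero b hb]; simp)
      (fun h => absurd (Finset.mem_univ i0) h),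
    Finset.sum_eq_single i0 (fun b _ hb => by rw [hzero b hb]; simp)
      (fun h => absurd (Finset.mem_univ i0) h)] at h1
  have : (hPh.eigenvalues i0 : ℂ) = 1 := by
    have hne : (hPh.eigenvalues i0 : ℂ) ≠ 0 := by exact_mod_cast hi0
    have h2 : (hPh.eigenvalues i0 : ℂ) * (hPh.eigenvalues i0 : ℂ)
        = (hPh.eigenvalues i0 : ℂ) * 1 := by rw [mul_one, ← pow_two]; exact h1
    exact mul_left_cancel₀ hne h2
  exact ⟨i0, by exact_mod_cast this, hzero⟩


lemma proj_trace_matFun (f : ℝ → ℝ) (hf0 : f 0 = 0) (hf1 : f 1 = 0)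
    {P : Matrix (Fin n) (Fin n) ℂ} (hP : IsRankOneProj P) :
    (matFun f P).trace = 0 := by
  obtain ⟨i0, h1, h0⟩ := proj_eig hP
  rw [trace_matFun f hP.1]
  rw [Finset.sum_eq_single i0 (fun b _ hb => by rw [h0 b hb, hf0]; simp)
      (fun h => absurd (Finset.mem_univ i0) h), h1, hf1]
  simp

lemma proj_trace {P : Matrix (Fin n) (Fin n) ℂ} (hP : IsRankOneProj P) :
    P.trace = 1 := by
  obtain ⟨i0, h1, h0⟩ := proj_eig hP
  rw [trace_eq_sum_eigenvalues hP.1]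
  rw [Finset.sum_eq_single i0 (fun b _ hb => by rw [h0 b hb]; simp)
      (fun h => absurd (Finset.mem_univ i0) h), h1]
  simp

lemma proj_posSemidef {P : Matrix (Fin n) (Fin n) ℂ} (hP : IsRankOneProj P) :
    P.PosSemidef := by
  have h : P = Pᴴ * P := by
    conv_lhs => rw [← hP.2.1]
    rw [hP.1.eq]
  rw [h]
  exact Matrix.posSemidef_conjTranspose_mul_self P

lemma proj_density {P : Matrix (Fin n) (Fin n) ℂ} (hP : IsRankOneProj P) :
    IsDensity P := ⟨proj_posSemidef hP, proj_trace hP⟩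

lemma psd_csmul {M : Matrix (Fin n) (Fin n) ℂ} (hM : M.PosSemidef) {r : ℝ} (hr : 0 ≤ r) :
    ((r : ℂ) • M).PosSemidef := by
  constructor
  · rw [Matrix.IsHermitian, Matrix.conjTranspose_smul, hM.1.eq]
    congr 1
    simp [Complex.star_def, Complex.conj_ofReal]
  · intro x
    exact (hM.smul (show (0:ℂ) ≤ (r:ℂ) by exact_mod_cast hr)).2 x

lemma f_half_neg {f : ℝ → ℝ} (hconv : StrictConvexOn ℝ (Set.Ici 0) f)
    (hf0 : f 0 = 0) (hf1 : f 1 = 0) : f (1/2) < 0 := by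
  have := hconv.2 (Set.mem_Ici.mpr le_rfl) (Set.mem_Ici.mpr zero_le_one)
    (by norm_num) (by norm_num : (0:ℝ) < 1/2) (by norm_num : (0:ℝ) < 1/2) (by norm_num)
  simpa [hf0, hf1] using this

lemma key_sum {f : ℝ → ℝ} (hconv : StrictConvexOn ℝ (Set.Ici 0) f)
    (hf0 : f 0 = 0) (hf1 : f 1 = 0)
    (μ : Fin n → ℝ) (hnn : ∀ i, 0 ≤ μ i) (hsum : ∑ i, μ i = 1)
    (hcard : (Finset.univ.filter (fun i => μ i ≠ 0)).card ≤ 2) :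
    2 * f (1/2) ≤ ∑ i, f (μ i) ∧
      (∑ i, f (μ i) = 2 * f (1/2) → ∑ i, (μ i)^2 = 1/2) := by
  classical
  set s := Finset.univ.filter (fun i => μ i ≠ 0) with hs
  have hzero : ∀ i ∈ Finset.univ, i ∉ s → μ i = 0 := by
    intro i _ hi
    by_contra h
    exact hi (Finset.mem_filter.mpr ⟨Finset.mem_univ i, h⟩)
  have hsum' : ∑ i ∈ s, μ i = 1 := by
    rw [← hsum]
    exact Finset.sum_subset (Finset.filter_subset _ _) hzero
  have hf : ∑ i, f (μ i) = ∑ i ∈ s, f (μ i) := by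
    refine (Finset.sum_subset (Finset.filter_subset _ _) ?_).symm
    intro i hi hni
    rw [hzero i hi hni, hf0]
  have hsq : ∑ i, (μ i)^2 = ∑ i ∈ s, (μ i)^2 := by
    refine (Finset.sum_subset (Finset.filter_subset _ _) ?_).symm
    intro i hi hni
    rw [hzero i hi hni]; ring
  have hfhalf : f (1/2) < 0 := f_half_neg hconv hf0 hf1
  interval_cases h : s.card
  · rw [Finset.card_eq_zero] at h
    rw [h, Finset.sum_empty] at hsum'
    norm_num at hsum'
  · obtain ⟨a, ha⟩ := Finset.card_eq_one.mp h
    rw [ha, Finset.sum_singleton] at hsum'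
    rw [hf, ha, Finset.sum_singleton, hsum', hf1]
    constructor
    · linarith
    · intro h'; linarith
  · obtain ⟨a, b, hab, hab2⟩ := Finset.card_eq_two.mp h
    rw [hab2, Finset.sum_pair hab] at hsum'
    rw [hf, hab2, Finset.sum_pair hab]
    have hx := hnn a
    have hy := hnn b
    have hmid : (1:ℝ)/2 = (1/2 : ℝ) • μ a + (1/2 : ℝ) • μ b := by
      simp only [smul_eq_mul]; linarith
    have hcvx := hconv.convexOn.2 (Set.mem_Ici.mpr hx) (Set.mem_Ici.mpr hy)
      (by norm_num : (0:ℝ) ≤ 1/2) (by norm_num : (0:ℝ) ≤ 1/2) (by norm_num)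
    rw [← hmid] at hcvx
    simp only [smul_eq_mul] at hcvx
    constructor
    · linarith
    · intro h'
      have hxy : μ a = μ b := by
        by_contra hne
        have := hconv.2 (Set.mem_Ici.mpr hx) (Set.mem_Ici.mpr hy) hne
          (by norm_num : (0:ℝ) < 1/2) (by norm_num : (0:ℝ) < 1/2) (by norm_num)
        rw [← hmid] at this
        simp only [smul_eq_mul] at this
        linarith
      rw [hsq, hab2, Finset.sum_pair hab]
      have : μ a = 1/2 := by linarith
      rw [← hxy, this] at *
      nlinarith

lemma rank_add_le' (A B : Matrix (Fin n) (Fin n) ℂ) : (A + B).rank ≤ A.rank + B.rank := by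
  rw [Matrix.rank, Matrix.rank, Matrix.rank, Matrix.mulVecLin_add]
  have hle : LinearMap.range (A.mulVecLin + B.mulVecLin) ≤
      LinearMap.range A.mulVecLin ⊔ LinearMap.range B.mulVecLin := by
    rintro x ⟨v, rfl⟩
    exact Submodule.mem_sup.mpr ⟨A.mulVecLin v, ⟨v, rfl⟩, B.mulVecLin v, ⟨v, rfl⟩, rfl⟩
  exact le_trans (Submodule.finrank_mono hle)
    (Submodule.finrank_add_le_finrank_add_finrank _ _)

lemma rank_csmul {c : ℂ} (hc : c ≠ 0) (A : Matrix (Fin n) (Fin n) ℂ) :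
    (c • A).rank = A.rank := by
  have h : c • A = (c • (1 : Matrix (Fin n) (Fin n) ℂ)) * A := by
    rw [Matrix.smul_mul, Matrix.one_mul]
  rw [h]
  apply Matrix.rank_mul_eq_right_of_isUnit_det
  rw [Matrix.det_smul, Matrix.det_one, mul_one]
  exact (pow_ne_zero _ hc).isUnit

lemma eq_zero_of_trace_re {X : Matrix (Fin n) (Fin n) ℂ}
    (h : ((X * Xᴴ).trace).re = 0) : X = 0 := by
  have hexp : (X * Xᴴ).trace = ∑ i, ∑ j, (Complex.normSq (X i j) : ℂ) := by
    rw [Matrix.trace]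
    simp [Matrix.mul_apply, Matrix.conjTranspose_apply, Matrix.diag, Complex.mul_conj]
  rw [hexp] at h
  push_cast at h
  have h' : ∑ i, ∑ j, Complex.normSq (X i j) = 0 := by exact_mod_cast h
  ext i j
  have h1 := (Finset.sum_eq_zero_iff_of_nonneg
    (fun i _ => Finset.sum_nonneg fun j _ => Complex.normSq_nonneg _)).mp h' i (Finset.mem_univ i)
  have h2 := (Finset.sum_eq_zero_iff_of_nonneg
    (fun j _ => Complex.normSq_nonneg _)).mp h1 j (Finset.mem_univ j)
  simpa using Complex.normSq_eq_zero.mp h2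

lemma jensen_proj {f : ℝ → ℝ} (hconv : StrictConvexOn ℝ (Set.Ici 0) f)
    (hf0 : f 0 = 0) (hf1 : f 1 = 0)
    {P Q : Matrix (Fin n) (Fin n) ℂ} (hP : IsRankOneProj P) (hQ : IsRankOneProj Q) :
    jensen f P Q ≤ -2 * f (1/2) ∧ (jensen f P Q = -2 * f (1/2) → P * Q = 0) := by
  classical
  set M : Matrix (Fin n) (Fin n) ℂ := (1/2 : ℂ) • (P + Q) with hMdef
  have hMpsd : M.PosSemidef := by
    rw [hMdef, show (1/2:ℂ) = ((1/2:ℝ):ℂ) by norm_num]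
    exact psd_csmul ((proj_posSemidef hP).add (proj_posSemidef hQ)) (by norm_num)
  have hMh : M.IsHermitian := hMpsd.1
  have hnn : ∀ i, 0 ≤ hMh.eigenvalues i := hMpsd.eigenvalues_nonneg
  have htr : M.trace = 1 := by
    rw [hMdef, Matrix.trace_smul, Matrix.trace_add, proj_trace hP, proj_trace hQ]
    norm_num
  have hsum : ∑ i, hMh.eigenvalues i = 1 := by
    have h2 : ((∑ i, hMh.eigenvalues i : ℝ) : ℂ) = 1 := by
      push_cast
      rw [← trace_eq_sum_eigenvalues hMh, htr]
    exact_mod_cast h2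
  have hrank : M.rank ≤ 2 := by
    rw [hMdef, rank_csmul (by norm_num)]
    calc (P + Q).rank ≤ P.rank + Q.rank := rank_add_le' P Q
      _ = 2 := by rw [hP.2.2, hQ.2.2]
  have hcard : (Finset.univ.filter (fun i => hMh.eigenvalues i ≠ 0)).card ≤ 2 := by
    calc (Finset.univ.filter (fun i => hMh.eigenvalues i ≠ 0)).card
        = Fintype.card {i // hMh.eigenvalues i ≠ 0} := (Fintype.card_subtype _).symm
      _ = M.rank := (hMh.rank_eq_card_non_zero_eigs).symm
      _ ≤ 2 := hrank
  obtain ⟨hineq, heqc⟩ := key_sum hconv hf0 hf1 hMh.eigenvalues hnn hsum hcard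
  have hjval : jensen f P Q = - ∑ i, f (hMh.eigenvalues i) := by
    rw [jensen, Matrix.trace_sub, Matrix.trace_smul, Matrix.trace_add,
      proj_trace_matFun f hf0 hf1 hP, proj_trace_matFun f hf0 hf1 hQ,
      ← hMdef, trace_matFun f hMh]
    push_cast
    simp
  constructor
  · rw [hjval]; linarith
  · intro hE
    rw [hjval] at hE
    have hsq : ∑ i, (hMh.eigenvalues i)^2 = 1/2 := heqc (by linarith)
    have htr2 : ((M * M).trace).re = 1/2 := by
      rw [trace_sq hMh]
      have : (∑ i, ((hMh.eigenvalues i : ℂ))^2) = ((∑ i, (hMh.eigenvalues i)^2 : ℝ) : ℂ) := by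
        push_cast; rfl
      rw [this, hsq]
      norm_num
    have hexp : M * M = (1/4 : ℂ) • (P*P + P*Q + (Q*P + Q*Q)) := by
      rw [hMdef, Matrix.smul_mul, Matrix.mul_smul, smul_smul, Matrix.add_mul,
        Matrix.mul_add, Matrix.mul_add]
      norm_num
    have htrPQ : ((P * Q).trace).re = 0 := by
      rw [hexp, Matrix.trace_smul, Matrix.trace_add, Matrix.trace_add, Matrix.trace_add,
        hP.2.1, hQ.2.1, proj_trace hP, proj_trace hQ, Matrix.trace_mul_comm Q P] at htr2
      have : ((1/4 : ℂ) • (1 + (P*Q).trace + ((P*Q).trace + 1))).re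
          = (2 + 2 * ((P*Q).trace).re) / 4 := by
        simp [Complex.add_re, Complex.smul_re]
        ring
      rw [this] at htr2
      linarith
    apply eq_zero_of_trace_re
    have htr3 : ((P*Q) * (P*Q)ᴴ).trace = (P*Q).trace := by
      rw [Matrix.conjTranspose_mul, hP.1.eq, hQ.1.eq]
      have e1 : P*Q*(Q*P) = P*Q*P := by
        rw [← Matrix.mul_assoc, Matrix.mul_assoc P Q Q, hQ.2.1]
      rw [e1, Matrix.trace_mul_cycle P Q P, hP.2.1]
    rw [htr3]
    exact htrPQ

lemma stdBasis_diag (i : Fin n) :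
    Matrix.single i i (1:ℂ) = Matrix.diagonal (Pi.single i 1) := by
  ext a b
  simp only [Matrix.single, Matrix.diagonal, Pi.single_apply, Matrix.of_apply]
  by_cases h1 : i = a <;> by_cases h2 : a = b <;> simp_all [eq_comm]

lemma diagonal_eq_sum (d : Fin n → ℂ) :
    Matrix.diagonal d = ∑ i, Matrix.single i i (d i) := by
  ext a b
  simp only [Matrix.sum_apply, Matrix.single, Matrix.diagonal, Matrix.of_apply]
  by_cases h : a = b
  · subst h; simp [Finset.sum_ite_eq]
  · rw [if_neg h, Finset.sum_eq_zero]
    intro x _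
    rw [if_neg]
    rintro ⟨rfl, rfl⟩
    exact h rfl

lemma real_smul_mat (r : ℝ) (M : Matrix (Fin n) (Fin n) ℂ) : r • M = (r:ℂ) • M := by
  ext i j; simp [Matrix.smul_apply, Complex.real_smul]

lemma density_decomp {A : Matrix (Fin n) (Fin n) ℂ} (hA : IsDensity A) :
    ∃ (w : Fin n → ℝ) (P : Fin n → Matrix (Fin n) (Fin n) ℂ),
      (∀ i, 0 ≤ w i) ∧ (∑ i, w i = 1) ∧ (∀ i, IsRankOneProj (P i)) ∧
      A = ∑ i, w i • P i := by
  classical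
  obtain ⟨hApsd, hAtr⟩ := hA
  set hAh := hApsd.1 with hAhdef
  set U : Matrix (Fin n) (Fin n) ℂ := (hAh.eigenvectorUnitary : Matrix (Fin n) (Fin n) ℂ) with hU
  have hUU : star U * U = 1 := Unitary.coe_star_mul_self _
  refine ⟨hAh.eigenvalues, fun i => U * Matrix.single i i 1 * star U,
    hApsd.eigenvalues_nonneg, ?_, ?_, ?_⟩
  · have h2 : ((∑ i, hAh.eigenvalues i : ℝ) : ℂ) = 1 := by
      push_cast
      rw [← trace_eq_sum_eigenvalues hAh, hAtr]
    exact_mod_cast h2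
  · intro i
    refine ⟨?_, ?_, ?_⟩
    · rw [Matrix.IsHermitian, Matrix.conjTranspose_mul, Matrix.conjTranspose_mul]
      have h1 : (Matrix.single i i (1:ℂ))ᴴ = Matrix.single i i 1 := by
        ext a b
        simp only [Matrix.conjTranspose_apply, Matrix.single, Matrix.of_apply]
        by_cases h1 : i = b <;> by_cases h2 : i = a <;> simp_all [eq_comm]
      rw [h1]
      simp only [Matrix.star_eq_conjTranspose, Matrix.conjTranspose_conjTranspose]
      rw [Matrix.mul_assoc]
    · rw [conj_mul_conj hUU, Matrix.single_mul_single_same, mul_one]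
    · show (U * Matrix.single i i 1 * star U).rank = 1
      have hdU : IsUnit U.det := Matrix.UnitaryGroup.det_isUnit _
      have hdsU : IsUnit (star U).det := by
        rw [Matrix.star_eq_conjTranspose, Matrix.det_conjTranspose]
        exact hdU.star
      rw [Matrix.rank_mul_eq_left_of_isUnit_det (star U) (U * Matrix.single i i 1) hdsU,
        Matrix.rank_mul_eq_right_of_isUnit_det U (Matrix.single i i 1) hdU,
        stdBasis_diag, Matrix.rank_diagonal]
      simp [Pi.single_apply]
  · have hspec := hAh.spectral_theorem
    rw [Unitary.conjStarAlgAut_apply, ← hU] at hspec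
    conv_lhs => rw [hspec]
    rw [show Matrix.diagonal (RCLike.ofReal ∘ hAh.eigenvalues)
        = ∑ i, Matrix.single i i ((hAh.eigenvalues i : ℂ)) from
      diagonal_eq_sum _]
    rw [Matrix.mul_sum, Matrix.sum_mul]
    refine Finset.sum_congr rfl fun i _ => ?_
    rw [real_smul_mat]
    have h3 : Matrix.single i i ((hAh.eigenvalues i : ℂ))
        = (hAh.eigenvalues i : ℂ) • Matrix.single i i 1 := by
      ext a b
      simp only [Matrix.single, Matrix.smul_apply, Matrix.of_apply, smul_eq_mul]
      split <;> simp
    rw [h3, Matrix.mul_smul, Matrix.smul_mul]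

lemma density_smul_add {A B : Matrix (Fin n) (Fin n) ℂ} (hA : IsDensity A) (hB : IsDensity B)
    {a b : ℝ} (ha : 0 ≤ a) (hb : 0 ≤ b) (hab : a + b = 1) :
    IsDensity (a • A + b • B) := by
  constructor
  · rw [real_smul_mat, real_smul_mat]
    exact (psd_csmul hA.1 ha).add (psd_csmul hB.1 hb)
  · rw [Matrix.trace_add, real_smul_mat, real_smul_mat, Matrix.trace_smul, Matrix.trace_smul,
      hA.2, hB.2, smul_eq_mul, smul_eq_mul, mul_one, mul_one]
    exact_mod_cast congrArg (fun r : ℝ => (r : ℂ)) hab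

lemma jensen_convexOn {f : ℝ → ℝ}
    (hjc : ∀ t : ℝ, 0 ≤ t → t ≤ 1 →
      ∀ A₁ B₁ A₂ B₂ : Matrix (Fin n) (Fin n) ℂ,
        IsDensity A₁ → IsDensity B₁ → IsDensity A₂ → IsDensity B₂ →
        jensen f ((t : ℂ) • A₁ + ((1 - t : ℝ) : ℂ) • A₂)
            ((t : ℂ) • B₁ + ((1 - t : ℝ) : ℂ) • B₂) ≤
          t * jensen f A₁ B₁ + (1 - t) * jensen f A₂ B₂) :
    ConvexOn ℝ {p : Matrix (Fin n) (Fin n) ℂ × Matrix (Fin n) (Fin n) ℂ |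
        IsDensity p.1 ∧ IsDensity p.2}
      (fun p => jensen f p.1 p.2) := by
  constructor
  · intro x hx y hy a b ha hb hab
    exact ⟨density_smul_add hx.1 hy.1 ha hb hab, density_smul_add hx.2 hy.2 ha hb hab⟩
  · intro x hx y hy a b ha hb hab
    have hb' : b = 1 - a := by linarith
    subst hb'
    have h := hjc a ha (by linarith) x.1 x.2 y.1 y.2 hx.1 hx.2 hy.1 hy.2
    simp only [smul_eq_mul]
    convert h using 2
    · rfl
    all_goals simp only [Prod.fst_add, Prod.snd_add, Prod.smul_fst, Prod.smul_snd, real_smul_mat]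

end JAux


open JAux in
/-- if `J_f` is jointly convex then `J_f(A,B) ≤ -2f(1/2)` on
density operators, and equality forces `AB = 0`. -/
theorem jensen_density_max {n : ℕ} (hn : 2 ≤ n) (f : ℝ → ℝ)
    (hconv : StrictConvexOn ℝ (Set.Ici 0) f)
    (hcont : ContinuousOn f (Set.Ici 0))
    (hf0 : f 0 = 0) (hf1 : f 1 = 0)
    (hjc : ∀ t : ℝ, 0 ≤ t → t ≤ 1 →
      ∀ A₁ B₁ A₂ B₂ : Matrix (Fin n) (Fin n) ℂ,
        IsDensity A₁ → IsDensity B₁ → IsDensity A₂ → IsDensity B₂ →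
        jensen f ((t : ℂ) • A₁ + ((1 - t : ℝ) : ℂ) • A₂)
            ((t : ℂ) • B₁ + ((1 - t : ℝ) : ℂ) • B₂) ≤
          t * jensen f A₁ B₁ + (1 - t) * jensen f A₂ B₂)
    (A B : Matrix (Fin n) (Fin n) ℂ) (hA : IsDensity A) (hB : IsDensity B) :
    jensen f A B ≤ -2 * f (1/2) ∧ (jensen f A B = -2 * f (1/2) → A * B = 0) := by

  classical
  obtain ⟨α, P, hα0, hα1, hPproj, hAeq⟩ := density_decomp hA
  obtain ⟨β, Q, hβ0, hβ1, hQproj, hBeq⟩ := density_decomp hB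
  set w : Fin n × Fin n → ℝ := fun p => α p.1 * β p.2 with hw
  have hw0 : ∀ p ∈ Finset.univ (α := Fin n × Fin n), 0 ≤ w p :=
    fun p _ => mul_nonneg (hα0 p.1) (hβ0 p.2)
  have hw1 : ∑ p : Fin n × Fin n, w p = 1 := by
    rw [Fintype.sum_prod_type]
    simp only [hw, ← Finset.mul_sum, hβ1, mul_one]
    exact hα1
  set pr : Fin n × Fin n → Matrix (Fin n) (Fin n) ℂ × Matrix (Fin n) (Fin n) ℂ :=
    fun p => (P p.1, Q p.2) with hpr
  have hmem : ∀ p ∈ Finset.univ (α := Fin n × Fin n),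
      pr p ∈ {p : Matrix (Fin n) (Fin n) ℂ × Matrix (Fin n) (Fin n) ℂ |
        IsDensity p.1 ∧ IsDensity p.2} :=
    fun p _ => ⟨proj_density (hPproj p.1), proj_density (hQproj p.2)⟩
  have hsumAB : (∑ p : Fin n × Fin n, w p • pr p) = (A, B) := by
    apply Prod.ext
    · rw [Prod.fst_sum, hAeq, Fintype.sum_prod_type]
      refine Finset.sum_congr rfl fun i _ => ?_
      simp only [hpr, hw, Prod.smul_fst]
      rw [← Finset.sum_smul, ← Finset.mul_sum, hβ1, mul_one]
    · rw [Prod.snd_sum, hBeq]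
      rw [Fintype.sum_prod_type_right]
      refine Finset.sum_congr rfl fun j _ => ?_
      simp only [hpr, hw, Prod.smul_snd]
      rw [← Finset.sum_smul, ← Finset.sum_mul, hα1, one_mul]
  have hcvx := (jensen_convexOn hjc).map_sum_le hw0 hw1 hmem
  rw [hsumAB] at hcvx
  have hbound : ∀ p : Fin n × Fin n,
      jensen f (P p.1) (Q p.2) ≤ -2 * f (1/2) ∧
        (jensen f (P p.1) (Q p.2) = -2 * f (1/2) → P p.1 * Q p.2 = 0) :=
    fun p => jensen_proj hconv hf0 hf1 (hPproj p.1) (hQproj p.2)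
  have hstep : ∑ p : Fin n × Fin n, w p • jensen f ((pr p).1) ((pr p).2)
      ≤ -2 * f (1/2) := by
    calc ∑ p : Fin n × Fin n, w p • jensen f ((pr p).1) ((pr p).2)
        ≤ ∑ p : Fin n × Fin n, w p * (-2 * f (1/2)) := by
          refine Finset.sum_le_sum fun p _ => ?_
          rw [smul_eq_mul]
          exact mul_le_mul_of_nonneg_left (hbound p).1 (hw0 p (Finset.mem_univ p))
      _ = -2 * f (1/2) := by rw [← Finset.sum_mul, hw1, one_mul]
  constructor
  · exact le_trans hcvx hstep
  · intro hE
    have hsum_eq : ∑ p : Fin n × Fin n, w p • jensen f ((pr p).1) ((pr p).2)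
        = -2 * f (1/2) := le_antisymm hstep (hE ▸ hcvx)
    have hterm : ∀ p ∈ Finset.univ (α := Fin n × Fin n),
        w p * (-2 * f (1/2) - jensen f ((pr p).1) ((pr p).2)) = 0 := by
      have hnonneg : ∀ p ∈ Finset.univ (α := Fin n × Fin n),
          0 ≤ w p * (-2 * f (1/2) - jensen f ((pr p).1) ((pr p).2)) := fun p _ =>
        mul_nonneg (hw0 p (Finset.mem_univ p)) (by linarith [(hbound p).1])
      have hzero : ∑ p : Fin n × Fin n,
          w p * (-2 * f (1/2) - jensen f ((pr p).1) ((pr p).2)) = 0 := by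
        have hsplit : ∑ p : Fin n × Fin n,
            w p * (-2 * f (1/2) - jensen f ((pr p).1) ((pr p).2))
            = (∑ p : Fin n × Fin n, w p) * (-2 * f (1/2))
              - ∑ p : Fin n × Fin n, w p • jensen f ((pr p).1) ((pr p).2) := by
          simp only [mul_sub, smul_eq_mul]
          rw [Finset.sum_sub_distrib, Finset.sum_mul]
        rw [hsplit, hw1, one_mul, hsum_eq, sub_self]
      exact (Finset.sum_eq_zero_iff_of_nonneg hnonneg).mp hzero
    have hPQ : ∀ p : Fin n × Fin n, w p ≠ 0 → P p.1 * Q p.2 = 0 := by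
      intro p hp
      have := hterm p (Finset.mem_univ p)
      rcases mul_eq_zero.mp this with h | h
      · exact absurd h hp
      · exact (hbound p).2 (by linarith [sub_eq_zero.mp h])
    rw [hAeq, hBeq, Matrix.sum_mul]
    rw [Finset.sum_eq_zero]
    intro i _
    rw [Matrix.mul_sum, Finset.sum_eq_zero]
    intro j _
    rw [smul_mul_assoc, mul_smul_comm, smul_smul]
    by_cases h : α i * β j = 0
    · rw [h, zero_smul]
    · rw [hPQ (i, j) h, smul_zero]
end

section
/- If f : (0,∞) → ℝ is strictly convex, then the map X ↦ tr f(X) is strictly convex on the set of positive definite operators on a finite-dimensional complex Hilbert space; i.e., for A ≠ B positive definite and 0 < λ < 1, tr f(λA + (1−λ)B) < λ tr f(A) + (1−λ) tr f(B). -/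
open Matrix
open scoped ComplexOrder

private lemma trace_matFun_re {n : ℕ} (f : ℝ → ℝ) {M : Matrix (Fin n) (Fin n) ℂ}
    (hM : M.IsHermitian) :
    ((matFun f M).trace).re = ∑ i, f (hM.eigenvalues i) := by
  rw [matFun, dif_pos hM, Matrix.trace_mul_cycle,
    Unitary.coe_star_mul_self hM.eigenvectorUnitary, Matrix.one_mul, Matrix.trace_diagonal,
    ← Complex.ofReal_sum, Complex.ofReal_re]

private lemma peierls {n : ℕ} (f : ℝ → ℝ)
    (hconv : StrictConvexOn ℝ (Set.Ioi 0) f)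
    {M : Matrix (Fin n) (Fin n) ℂ} (hM : M.PosDef)
    {U : Matrix (Fin n) (Fin n) ℂ} (hU : U ∈ Matrix.unitaryGroup (Fin n) ℂ) :
    (∀ i, (0:ℝ) < ((star U * M * U) i i).re) ∧
    (∑ i, f (((star U * M * U) i i).re) ≤ ∑ j, f (hM.1.eigenvalues j)) ∧
    ((∑ i, f (((star U * M * U) i i).re) = ∑ j, f (hM.1.eigenvalues j)) →
      star U * M * U = Matrix.diagonal (fun i => ((((star U * M * U) i i).re : ℝ) : ℂ))) := by
  classical
  set V : Matrix (Fin n) (Fin n) ℂ := (hM.1.eigenvectorUnitary : Matrix (Fin n) (Fin n) ℂ)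
    with hVdef
  set α : Fin n → ℝ := hM.1.eigenvalues with hαdef
  set W : Matrix (Fin n) (Fin n) ℂ := star U * V with hWdef
  have hαpos : ∀ j, 0 < α j := hM.eigenvalues_pos
  have hUU : star U * U = 1 := Matrix.mem_unitaryGroup_iff'.mp hU
  have hVV : V * star V = 1 := Unitary.coe_mul_star_self hM.1.eigenvectorUnitary
  have hWW : W * star W = 1 := by
    rw [hWdef, Matrix.star_mul, star_star, Matrix.mul_assoc, ← Matrix.mul_assoc V, hVV,
      Matrix.one_mul, hUU]
  have hWW' : star W * W = 1 := mul_eq_one_comm.mp hWW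
  set q : Fin n → Fin n → ℝ := fun i j => Complex.normSq (W i j) with hqdef
  have hqnn : ∀ i j, 0 ≤ q i j := fun i j => Complex.normSq_nonneg _
  -- entry formula
  have hN : ∀ i k, (star U * M * U) i k = ∑ j, W i j * (α j : ℂ) * star (W k j) := by
    intro i k
    have h1 : star U * M * U = W * Matrix.diagonal (fun j => (α j : ℂ)) * star W := by
      conv_lhs => rw [hM.1.spectral_theorem, Unitary.conjStarAlgAut_apply]
      rw [hWdef, Matrix.star_mul, star_star, ← hVdef]
      have h2 : (Matrix.diagonal (RCLike.ofReal ∘ hM.1.eigenvalues) : Matrix (Fin n) (Fin n) ℂ)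
          = Matrix.diagonal (fun j => (α j : ℂ)) := rfl
      rw [h2]
      simp only [Matrix.mul_assoc, hVdef]
    rw [h1, Matrix.mul_apply]
    refine Finset.sum_congr rfl fun j _ => ?_
    rw [Matrix.mul_diagonal, Matrix.star_apply]
  -- diagonal term formula
  have hterm : ∀ i j, W i j * (α j : ℂ) * star (W i j) = ((q i j * α j : ℝ) : ℂ) := by
    intro i j
    rw [Complex.ofReal_mul, hqdef]
    rw [Complex.star_def]
    rw [← Complex.mul_conj]
    ring
  have hdC : ∀ i, (star U * M * U) i i = ((∑ j, q i j * α j : ℝ) : ℂ) := by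
    intro i
    rw [hN i i, Complex.ofReal_sum]
    exact Finset.sum_congr rfl fun j _ => hterm i j
  have hd : ∀ i, ((star U * M * U) i i).re = ∑ j, q i j * α j := by
    intro i; rw [hdC i, Complex.ofReal_re]
  -- row and column sums
  have hrow : ∀ i, ∑ j, q i j = 1 := by
    intro i
    have h1 : (W * star W) i i = 1 := by rw [hWW]; simp [Matrix.one_apply]
    rw [Matrix.mul_apply] at h1
    have h2 : ∀ j, W i j * (star W) j i = ((q i j : ℝ) : ℂ) := by
      intro j
      rw [Matrix.star_apply, Complex.star_def, Complex.mul_conj]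
    rw [Finset.sum_congr rfl fun j _ => h2 j, ← Complex.ofReal_sum] at h1
    exact_mod_cast h1
  have hcol : ∀ j, ∑ i, q i j = 1 := by
    intro j
    have h1 : (star W * W) j j = 1 := by rw [hWW']; simp [Matrix.one_apply]
    rw [Matrix.mul_apply] at h1
    have h2 : ∀ i, (star W) j i * W i j = ((q i j : ℝ) : ℂ) := by
      intro i
      rw [Matrix.star_apply, Complex.star_def, mul_comm, Complex.mul_conj]
    rw [Finset.sum_congr rfl fun i _ => h2 i, ← Complex.ofReal_sum] at h1
    exact_mod_cast h1
  -- positivity of diagonal entries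
  have hpos : ∀ i, (0:ℝ) < ((star U * M * U) i i).re := by
    intro i
    rw [hd i]
    have : (∑ j, q i j • α j) ∈ Set.Ioi (0:ℝ) := by
      refine (convex_Ioi (0:ℝ)).sum_mem (fun j _ => hqnn i j) (hrow i) fun j _ => hαpos j
    simpa [smul_eq_mul] using this
  -- per-row Jensen
  have hjen : ∀ i, f (∑ j, q i j * α j) ≤ ∑ j, q i j * f (α j) := by
    intro i
    have := hconv.convexOn.map_sum_le (t := Finset.univ) (w := q i) (p := α)
      (fun j _ => hqnn i j) (hrow i) (fun j _ => hαpos j)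
    simpa [smul_eq_mul] using this
  have hswap : ∑ i, ∑ j, q i j * f (α j) = ∑ j, f (α j) := by
    rw [Finset.sum_comm]
    refine Finset.sum_congr rfl fun j _ => ?_
    rw [← Finset.sum_mul, hcol j, one_mul]
  have hle : ∑ i, f (((star U * M * U) i i).re) ≤ ∑ j, f (α j) := by
    calc ∑ i, f (((star U * M * U) i i).re) = ∑ i, f (∑ j, q i j * α j) := by
          exact Finset.sum_congr rfl fun i _ => by rw [hd i]
      _ ≤ ∑ i, ∑ j, q i j * f (α j) := Finset.sum_le_sum fun i _ => hjen i
      _ = ∑ j, f (α j) := hswap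
  refine ⟨hpos, hle, ?_⟩
  -- equality case
  intro heq
  -- termwise equality of the Jensen step
  have hterm0 : ∀ i, f (∑ j, q i j * α j) = ∑ j, q i j * f (α j) := by
    have hsum0 : ∑ i, (∑ j, q i j * f (α j) - f (∑ j, q i j * α j)) = 0 := by
      rw [Finset.sum_sub_distrib, hswap]
      have : ∑ i, f (∑ j, q i j * α j) = ∑ j, f (α j) := by
        rw [← heq]
        exact Finset.sum_congr rfl fun i _ => by rw [hd i]
      rw [this, sub_self]
    intro i
    have := (Finset.sum_eq_zero_iff_of_nonneg
      (fun i _ => sub_nonneg.mpr (hjen i))).mp hsum0 i (Finset.mem_univ i)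
    linarith [sub_eq_zero.mp this]
  -- for each i, eigenvalues with nonzero weight equal the diagonal entry
  have hkey : ∀ i j, W i j ≠ 0 → (α j : ℝ) = ∑ j, q i j * α j := by
    intro i j hWij
    set s : Finset (Fin n) := Finset.univ.filter (fun j => q i j ≠ 0) with hsdef
    have hsub : s ⊆ Finset.univ := Finset.subset_univ s
    have hzero : ∀ x ∈ Finset.univ, x ∉ s → q i x = 0 := by
      intro x _ hx
      by_contra hqx
      exact hx (Finset.mem_filter.mpr ⟨Finset.mem_univ x, hqx⟩)
    have hsum1 : ∑ j ∈ s, q i j = 1 := by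
      rw [← hrow i]
      exact Finset.sum_subset hsub (fun x h1 h2 => hzero x h1 h2)
    have hpt : ∑ j ∈ s, q i j • α j = ∑ j, q i j * α j := by
      simp only [smul_eq_mul]
      exact Finset.sum_subset hsub (fun x h1 h2 => by rw [hzero x h1 h2, zero_mul])
    have hpf : ∑ j ∈ s, q i j • f (α j) = ∑ j, q i j * f (α j) := by
      simp only [smul_eq_mul]
      exact Finset.sum_subset hsub (fun x h1 h2 => by rw [hzero x h1 h2, zero_mul])
    have heqi : f (∑ j ∈ s, q i j • α j) = ∑ j ∈ s, q i j • f (α j) := by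
      rw [hpt, hpf]; exact hterm0 i
    have hmemj : j ∈ s := by
      refine Finset.mem_filter.mpr ⟨Finset.mem_univ j, ?_⟩
      simpa [hqdef, Complex.normSq_eq_zero] using hWij
    have := (hconv.map_sum_eq_iff
      (fun j hj => lt_of_le_of_ne (hqnn i j) (Ne.symm (Finset.mem_filter.mp hj).2))
      hsum1 (fun j _ => hαpos j)).mp heqi j hmemj
    rw [this, hpt]
  -- conclude the matrix is diagonal
  ext i k
  have h3 : ∀ j, W i j * (α j : ℂ) * star (W k j)
      = (((∑ j, q i j * α j : ℝ)) : ℂ) * (W i j * star (W k j)) := by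
    intro j
    by_cases hWij : W i j = 0
    · rw [hWij]; ring
    · rw [← hkey i j hWij]; ring
  rw [hN i k, Finset.sum_congr rfl fun j _ => h3 j, ← Finset.mul_sum]
  have h4 : ∑ j, W i j * star (W k j) = (1 : Matrix (Fin n) (Fin n) ℂ) i k := by
    rw [← hWW, Matrix.mul_apply]
    exact Finset.sum_congr rfl fun j _ => by rw [Matrix.star_apply]
  rw [h4, Matrix.diagonal_apply, Matrix.one_apply, hd i]
  by_cases hik : i = k
  · simp [hik]
  · simp [hik]

/-- strict convexity of `X ↦ tr f(X)` on positive definite matrices. -/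
theorem traceFun_strictConvex {n : ℕ} (f : ℝ → ℝ)
    (hconv : StrictConvexOn ℝ (Set.Ioi 0) f)
    (A B : Matrix (Fin n) (Fin n) ℂ) (hA : A.PosDef) (hB : B.PosDef) (hAB : A ≠ B)
    (t : ℝ) (ht0 : 0 < t) (ht1 : t < 1) :
    ((matFun f ((t : ℂ) • A + ((1 - t : ℝ) : ℂ) • B)).trace).re <
      t * ((matFun f A).trace).re + (1 - t) * ((matFun f B).trace).re := by
  classical
  set C : Matrix (Fin n) (Fin n) ℂ := (t : ℂ) • A + ((1 - t : ℝ) : ℂ) • B with hCdef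
  have hC : C.IsHermitian := by
    rw [Matrix.IsHermitian, hCdef, Matrix.conjTranspose_add, Matrix.conjTranspose_smul,
      Matrix.conjTranspose_smul, hA.1.eq, hB.1.eq]
    simp [Complex.star_def, Complex.conj_ofReal]
  set U : Matrix (Fin n) (Fin n) ℂ := (hC.eigenvectorUnitary : Matrix (Fin n) (Fin n) ℂ)
    with hUdef
  have hU : U ∈ Matrix.unitaryGroup (Fin n) ℂ := hC.eigenvectorUnitary.2
  have hUU : U * star U = 1 := Matrix.mem_unitaryGroup_iff.mp hU
  obtain ⟨hApos, hAle, hAeq⟩ := peierls f hconv hA hU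
  obtain ⟨hBpos, hBle, hBeq⟩ := peierls f hconv hB hU
  set a : Fin n → ℝ := fun i => ((star U * A * U) i i).re with hadef
  set b : Fin n → ℝ := fun i => ((star U * B * U) i i).re with hbdef
  have hCU : star U * C * U = Matrix.diagonal (RCLike.ofReal ∘ hC.eigenvalues) := by
    rw [← hC.conjStarAlgAut_star_eigenvectorUnitary, Unitary.conjStarAlgAut_star_apply]
  have hmu : ∀ i, hC.eigenvalues i = t * a i + (1 - t) * b i := by
    intro i
    have h1 : star U * C * U = (t : ℂ) • (star U * A * U) + ((1 - t : ℝ) : ℂ) • (star U * B * U) := by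
      rw [hCdef]
      rw [Matrix.mul_add, Matrix.add_mul, Matrix.mul_smul, Matrix.mul_smul,
        Matrix.smul_mul, Matrix.smul_mul]
    have h2 := congrArg (fun X : Matrix (Fin n) (Fin n) ℂ => (X i i).re) (hCU.symm.trans h1)
    simpa [Matrix.diagonal_apply_eq, Complex.add_re, hadef, hbdef] using h2
  have ht1' : (0:ℝ) < 1 - t := by linarith
  -- rewrite traces
  rw [trace_matFun_re f hC, trace_matFun_re f hA.1, trace_matFun_re f hB.1]
  have hLHS : ∑ i, f (hC.eigenvalues i) = ∑ i, f (t * a i + (1 - t) * b i) :=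
    Finset.sum_congr rfl fun i _ => by rw [hmu i]
  rw [hLHS]
  -- scalar convexity step
  have hstep1 : ∀ i, f (t * a i + (1 - t) * b i) ≤ t * f (a i) + (1 - t) * f (b i) := by
    intro i
    have := hconv.convexOn.2 (hApos i) (hBpos i) ht0.le ht1'.le (by ring)
    simpa [smul_eq_mul] using this
  by_contra hcon
  push_neg at hcon
  have hS1 : ∑ i, f (t * a i + (1 - t) * b i) ≤ t * ∑ i, f (a i) + (1 - t) * ∑ i, f (b i) := by
    calc ∑ i, f (t * a i + (1 - t) * b i) ≤ ∑ i, (t * f (a i) + (1 - t) * f (b i)) :=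
          Finset.sum_le_sum fun i _ => hstep1 i
      _ = t * ∑ i, f (a i) + (1 - t) * ∑ i, f (b i) := by
          rw [Finset.sum_add_distrib, Finset.mul_sum, Finset.mul_sum]
  have hS2 : t * ∑ i, f (a i) + (1 - t) * ∑ i, f (b i)
      ≤ t * ∑ j, f (hA.1.eigenvalues j) + (1 - t) * ∑ j, f (hB.1.eigenvalues j) := by
    have h1 := mul_le_mul_of_nonneg_left hAle ht0.le
    have h2 := mul_le_mul_of_nonneg_left hBle ht1'.le
    linarith
  -- all inequalities are equalities
  have hEa : ∑ i, f (a i) = ∑ j, f (hA.1.eigenvalues j) := by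
    rcases lt_or_eq_of_le hAle with h | h
    · exfalso
      have := mul_lt_mul_of_pos_left h ht0
      have h2 := mul_le_mul_of_nonneg_left hBle ht1'.le
      linarith
    · exact h
  have hEb : ∑ i, f (b i) = ∑ j, f (hB.1.eigenvalues j) := by
    rcases lt_or_eq_of_le hBle with h | h
    · exfalso
      have := mul_lt_mul_of_pos_left h ht1'
      have h2 := mul_le_mul_of_nonneg_left hAle ht0.le
      linarith
    · exact h
  have hE1 : ∑ i, f (t * a i + (1 - t) * b i) = ∑ i, (t * f (a i) + (1 - t) * f (b i)) := by
    have hub : ∑ i, (t * f (a i) + (1 - t) * f (b i)) ≤ ∑ i, f (t * a i + (1 - t) * b i) := by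
      rw [Finset.sum_add_distrib, ← Finset.mul_sum, ← Finset.mul_sum, hEa, hEb]
      linarith
    exact le_antisymm (Finset.sum_le_sum fun i _ => hstep1 i) hub
  -- hence a = b
  have hab : ∀ i, a i = b i := by
    have hsum0 : ∑ i, (t * f (a i) + (1 - t) * f (b i) - f (t * a i + (1 - t) * b i)) = 0 := by
      rw [Finset.sum_sub_distrib, ← hE1, sub_self]
    intro i
    have h0 := (Finset.sum_eq_zero_iff_of_nonneg
      (fun i _ => sub_nonneg.mpr (hstep1 i))).mp hsum0 i (Finset.mem_univ i)
    by_contra hne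
    have := hconv.2 (hApos i) (hBpos i) hne ht0 ht1' (by ring)
    rw [smul_eq_mul, smul_eq_mul, smul_eq_mul, smul_eq_mul] at this
    linarith [sub_eq_zero.mp h0]
  -- Peierls equality cases
  have hDA := hAeq hEa
  have hDB := hBeq hEb
  have hNN : star U * A * U = star U * B * U := by
    rw [hDA, hDB]
    have hfe : (fun i => ((((star U * A * U) i i).re : ℝ) : ℂ))
        = fun i => ((((star U * B * U) i i).re : ℝ) : ℂ) := by
      funext i
      rw [show ((star U * A * U) i i).re = a i from rfl,
        show ((star U * B * U) i i).re = b i from rfl, hab i]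
    rw [hfe]
  have : A = B := by
    calc A = (U * star U) * A * (U * star U) := by rw [hUU, Matrix.one_mul, Matrix.mul_one]
      _ = U * (star U * A * U) * star U := by simp only [Matrix.mul_assoc]
      _ = U * (star U * B * U) * star U := by rw [hNN]
      _ = (U * star U) * B * (U * star U) := by simp only [Matrix.mul_assoc]
      _ = B := by rw [hUU, Matrix.one_mul, Matrix.mul_one]
  exact hAB this
end
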